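/- arXiv:2109.01816 — 15 statements merged into one kernel-verified Lean document; each statement's English description precedes it below -/
import Mathlib

section
/- Let A, B, C, X be real quaternions. If A·X − X·B = C, then D·X = A·C − C·(star B), where D := A² − (B + star B)·A + B·(star B) and star denotes quaternion conjugation. -/
theorem stmt_0 (A B C X : Quaternion ℝ)
    (h : A * X - X * B = C) :
    (A ^ 2 - (B + star B) * A + B * star B) * X = A * C - C * star B := by
  subst h
  ext <;> simp [Quaternion.ext_iff, pow_two, Quaternion.re_mul, Quaternion.imI_mul,
    Quaternion.imJ_mul, Quaternion.imK_mul] <;> ring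
end

section
/- Let A, B, C be real quaternions and set D := A² − (B + star B)·A + B·(star B). If D ≠ 0, then X := D⁻¹·(A·C − C·(star B)) is the unique quaternion satisfying A·X − X·B = C. -/
theorem stmt_1 (A B C : Quaternion ℝ)
    (D : Quaternion ℝ) (hD : D = A ^ 2 - (B + star B) * A + B * star B)
    (hD0 : D ≠ 0) :
    A * (D⁻¹ * (A * C - C * star B)) - (D⁻¹ * (A * C - C * star B)) * B = C ∧
      ∀ X : Quaternion ℝ, A * X - X * B = C → X = D⁻¹ * (A * C - C * star B) := by
  obtain ⟨t, ht⟩ : ∃ t : ℝ, B + star B = (t : Quaternion ℝ) := ⟨2 * B.re, B.self_add_star'⟩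
  obtain ⟨n, hn⟩ : ∃ n : ℝ, B * star B = (n : Quaternion ℝ) := ⟨(B * star B).re, B.mul_star_eq_coe⟩
  have hcomm : star B * B = B * star B := by ext <;> simp <;> ring
  have hn' : star B * B = (n : Quaternion ℝ) := by rw [hcomm, hn]
  have hDc : D = A ^ 2 - (t : Quaternion ℝ) * A + (n : Quaternion ℝ) := by rw [hD, ht, hn]
  -- key identity: for all X, A * X - X * B gives, after the second application, D * X
  have key : ∀ X : Quaternion ℝ,
      A * (A * X - X * B) - (A * X - X * B) * star B = D * X := by
    intro X
    have h1 : X * B * star B = X * (n : Quaternion ℝ) := by rw [mul_assoc, hn]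
    have h2 : A * (X * B) + A * X * star B = (t : Quaternion ℝ) * (A * X) := by
      rw [Quaternion.coe_commutes, ← ht]
      noncomm_ring
    rw [hDc]
    have expand : A * (A * X - X * B) - (A * X - X * B) * star B
        = A * (A * X) - (A * (X * B) + A * X * star B) + X * B * star B := by noncomm_ring
    rw [expand, h1, h2]
    simp only [Quaternion.coe_mul_eq_smul, Quaternion.mul_coe_eq_smul]
    noncomm_ring
    rw [Quaternion.coe_mul_eq_smul]
  -- D commutes with A
  have hDA : Commute D A := by
    rw [hDc]
    exact (((Commute.refl A).pow_left 2).sub_left ((Quaternion.coe_commute t A).mul_left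
      (Commute.refl A))).add_left (Quaternion.coe_commute n A)
  have hDiA : D⁻¹ * A = A * D⁻¹ := hDA.inv_left₀.eq
  constructor
  · -- compute A * X₀ - X₀ * B where X₀ = D⁻¹ * M, M = A*C - C*star B
    set M := A * C - C * star B with hM
    have hMC : A * M - M * B = D * C := by
      -- mirror of key: A*(A*C - C*star B) - (A*C - C*star B)*B = D*C
      have h1 : C * star B * B = C * (n : Quaternion ℝ) := by rw [mul_assoc, hn']
      have h2 : A * (C * star B) + A * C * B = (t : Quaternion ℝ) * (A * C) := by
        rw [Quaternion.coe_commutes, ← ht]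
        noncomm_ring
      have expand : A * M - M * B
          = A * (A * C) - (A * (C * star B) + A * C * B) + C * star B * B := by
        rw [hM]; noncomm_ring
      rw [expand, h1, h2, hDc]
      simp only [Quaternion.coe_mul_eq_smul, Quaternion.mul_coe_eq_smul]
      noncomm_ring
      rw [Quaternion.coe_mul_eq_smul]
    calc A * (D⁻¹ * M) - (D⁻¹ * M) * B
        = D⁻¹ * (A * M - M * B) := by
          rw [← mul_assoc, ← hDiA]; noncomm_ring
      _ = D⁻¹ * (D * C) := by rw [hMC]
      _ = C := by rw [← mul_assoc, inv_mul_cancel₀ hD0, one_mul]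
  · intro X hX
    have h := key X
    rw [hX] at h
    have : A * C - C * star B = D * X := h
    rw [this, ← mul_assoc, inv_mul_cancel₀ hD0, one_mul]
end

section
/- Let K, L, M, N, P be real quaternions with M ≠ 0 and L ≠ 0. Set A := M⁻¹·K, B := −N·L⁻¹, C := M⁻¹·P·L⁻¹, and D := A² − (B + star B)·A + B·(star B). If D ≠ 0, then X := D⁻¹·(A·C − C·(star B)) is the unique quaternion satisfying K·X·L + M·X·N = P. -/
theorem stmt_2 (K L M N P : Quaternion ℝ) (hM : M ≠ 0) (hL : L ≠ 0)
    (A B C D : Quaternion ℝ)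
    (hA : A = M⁻¹ * K) (hB : B = -(N * L⁻¹)) (hC : C = M⁻¹ * P * L⁻¹)
    (hD : D = A ^ 2 - (B + star B) * A + B * star B)
    (hD0 : D ≠ 0) :
    K * (D⁻¹ * (A * C - C * star B)) * L + M * (D⁻¹ * (A * C - C * star B)) * N = P ∧
      ∀ X : Quaternion ℝ, K * X * L + M * X * N = P →
        X = D⁻¹ * (A * C - C * star B) := by
  have ht : B + star B = ((2 * B.re : ℝ) : Quaternion ℝ) := Quaternion.self_add_star' B
  have hn : B * star B = ((Quaternion.normSq B : ℝ) : Quaternion ℝ) := by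
    rw [Quaternion.self_mul_star]
  set t : ℝ := 2 * B.re with htdef
  set n : ℝ := Quaternion.normSq B with hndef
  have hcomm : ∀ (r : ℝ) (x : Quaternion ℝ), (r : Quaternion ℝ) * x = x * r :=
    fun r x => Quaternion.coe_commutes r x
  have hD' : D = A ^ 2 - (t : Quaternion ℝ) * A + (n : Quaternion ℝ) := by
    rw [hD, ht, hn]
  -- reduction to Sylvester equation
  have hred : ∀ X : Quaternion ℝ,
      M⁻¹ * (K * X * L + M * X * N) * L⁻¹ = A * X - X * B := by
    intro X
    rw [hA, hB]
    calc M⁻¹ * (K * X * L + M * X * N) * L⁻¹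
        = M⁻¹ * K * X * (L * L⁻¹) + (M⁻¹ * M) * (X * (N * L⁻¹)) := by noncomm_ring
      _ = M⁻¹ * K * X + X * (N * L⁻¹) := by
          rw [mul_inv_cancel₀ hL, inv_mul_cancel₀ hM, mul_one, one_mul]
      _ = M⁻¹ * K * X - X * -(N * L⁻¹) := by noncomm_ring
  have hequiv : ∀ X : Quaternion ℝ, (K * X * L + M * X * N = P) ↔ (A * X - X * B = C) := by
    intro X
    constructor
    · intro h
      rw [← hred X, h, hC]
    · intro h
      have h2 : M⁻¹ * (K * X * L + M * X * N) * L⁻¹ = M⁻¹ * P * L⁻¹ := by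
        rw [hred X, h, hC]
      have h3 := mul_right_cancel₀ (inv_ne_zero hL) h2
      exact mul_left_cancel₀ (inv_ne_zero hM) h3
  have hAD : Commute A D := by
    rw [hD']
    exact (((Commute.refl A).pow_right 2).sub_right
      (((Quaternion.coe_commute t A).symm).mul_right (Commute.refl A))).add_right
      (Quaternion.coe_commute n A).symm
  set X₀ : Quaternion ℝ := D⁻¹ * (A * C - C * star B) with hX₀
  have hDX₀ : D * X₀ = A * C - C * star B := mul_inv_cancel_left₀ hD0 _
  -- key identity
  have hkey : ∀ Y : Quaternion ℝ,
      A * (A * Y - Y * B) - (A * Y - Y * B) * star B = D * Y := by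
    intro Y
    have e1 : A * Y * B + A * Y * star B = (t : Quaternion ℝ) * (A * Y) := by
      rw [← mul_add, ht, hcomm]
    have e2 : Y * (B * star B) = (n : Quaternion ℝ) * Y := by rw [hn, hcomm]
    calc A * (A * Y - Y * B) - (A * Y - Y * B) * star B
        = A ^ 2 * Y - (A * Y * B + A * Y * star B) + Y * (B * star B) := by noncomm_ring
      _ = A ^ 2 * Y - (t : Quaternion ℝ) * (A * Y) + (n : Quaternion ℝ) * Y := by rw [e1, e2]
      _ = D * Y := by rw [hD']; noncomm_ring
  -- existence
  have hex : A * X₀ - X₀ * B = C := by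
    apply mul_left_cancel₀ hD0
    have step1 : D * (A * X₀ - X₀ * B) = A * (A * C - C * star B) - (A * C - C * star B) * B := by
      calc D * (A * X₀ - X₀ * B)
          = D * A * X₀ - D * X₀ * B := by noncomm_ring
        _ = A * (D * X₀) - (D * X₀) * B := by rw [← hAD.eq, mul_assoc]
        _ = A * (A * C - C * star B) - (A * C - C * star B) * B := by rw [hDX₀]
    rw [step1]
    have e1 : A * C * star B + A * C * B = (t : Quaternion ℝ) * (A * C) := by
      rw [← mul_add, add_comm (star B) B, ht, hcomm]
    have e2 : C * (star B * B) = (n : Quaternion ℝ) * C := by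
      rw [Quaternion.star_mul_self, hcomm]
    calc A * (A * C - C * star B) - (A * C - C * star B) * B
        = A ^ 2 * C - (A * C * star B + A * C * B) + C * (star B * B) := by noncomm_ring
      _ = A ^ 2 * C - (t : Quaternion ℝ) * (A * C) + (n : Quaternion ℝ) * C := by rw [e1, e2]
      _ = D * C := by rw [hD']; noncomm_ring
  refine ⟨(hequiv X₀).mpr hex, fun X hX => ?_⟩
  have hX' : A * X - X * B = C := (hequiv X).mp hX
  have h4 : A * C - C * star B = D * X := by rw [← hX']; exact hkey X
  rw [hX₀, h4, inv_mul_cancel_left₀ hD0]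
end

section
/- Let A, C be real quaternions and set D := A² + (A + star A)·A + (star A)·A. If D ≠ 0, then X := D⁻¹·(A·C + C·A) is the unique quaternion satisfying the Lyapunov equation A·X + X·(star A) = C. -/
theorem stmt_3 (A C : Quaternion ℝ)
    (D : Quaternion ℝ) (hD : D = A ^ 2 + (A + star A) * A + star A * A)
    (hD0 : D ≠ 0) :
    A * (D⁻¹ * (A * C + C * A)) + (D⁻¹ * (A * C + C * A)) * star A = C ∧
      ∀ X : Quaternion ℝ, A * X + X * star A = C → X = D⁻¹ * (A * C + C * A) := by
  have hr : A + star A = ((2 * A.re : ℝ) : Quaternion ℝ) := Quaternion.self_add_star' A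
  set r : ℝ := 2 * A.re with hrdef
  have hn : star A * A = ((Quaternion.normSq A : ℝ) : Quaternion ℝ) := A.star_mul_self
  have hn' : A * star A = ((Quaternion.normSq A : ℝ) : Quaternion ℝ) := A.self_mul_star
  set s : ℝ := Quaternion.normSq A with hsdef
  have hDform : D = A ^ 2 + (r : Quaternion ℝ) * A + (s : Quaternion ℝ) := by
    rw [hD, hr, hn]
  -- key identity: for all X, A*(A*X + X*star A) + (A*X + X*star A)*A = D*X
  have key : ∀ X : Quaternion ℝ,
      A * (A * X + X * star A) + (A * X + X * star A) * A = D * X := by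
    intro X
    have h1 : A * X * star A + A * X * A = (r : Quaternion ℝ) * (A * X) := by
      rw [← mul_add, add_comm (star A) A, hr, Quaternion.coe_commutes]
    have h2 : X * star A * A = (s : Quaternion ℝ) * X := by
      rw [mul_assoc, hn, Quaternion.coe_commutes]
    calc A * (A * X + X * star A) + (A * X + X * star A) * A
        = A ^ 2 * X + (A * X * star A + A * X * A) + X * star A * A := by
          noncomm_ring
      _ = A ^ 2 * X + (r : Quaternion ℝ) * (A * X) + (s : Quaternion ℝ) * X := by
          rw [h1, h2]
      _ = D * X := by rw [hDform]; noncomm_ring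
  -- D commutes with A
  have hcomm : Commute A D := by
    rw [hDform]
    exact ((Commute.pow_right (Commute.refl A) 2).add_right
      ((Quaternion.coe_commute r A).symm.mul_right (Commute.refl A))).add_right
      (Quaternion.coe_commute s A).symm
  have hcommInv : Commute A D⁻¹ := hcomm.inv_right₀
  -- existence core: A*(A*C+C*A) + (A*C+C*A)*star A = D*C
  have hex : A * (A * C + C * A) + (A * C + C * A) * star A = D * C := by
    calc A * (A * C + C * A) + (A * C + C * A) * star A
        = A ^ 2 * C + (A * C * A + A * C * star A) + C * (A * star A) := by
          noncomm_ring
      _ = A ^ 2 * C + (r : Quaternion ℝ) * (A * C) + (s : Quaternion ℝ) * C := by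
          rw [← mul_add, hr, hn', ← Quaternion.coe_commutes, ← Quaternion.coe_commutes]
      _ = D * C := by rw [hDform]; noncomm_ring
  constructor
  · have : A * (D⁻¹ * (A * C + C * A)) + (D⁻¹ * (A * C + C * A)) * star A
        = D⁻¹ * (A * (A * C + C * A) + (A * C + C * A) * star A) := by
      rw [← mul_assoc A D⁻¹, hcommInv.eq]
      noncomm_ring
    rw [this, hex, ← mul_assoc, inv_mul_cancel₀ hD0, one_mul]
  · intro X hX
    have := key X
    rw [hX] at this
    rw [eq_inv_mul_iff_mul_eq₀ hD0]
    exact this.symm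
end

section
/- Let V be a real vector space with finrank V = 1 and Q a quadratic form on V. Then for every B in the Clifford algebra Cl(Q), the product B·(involute B) lies in the range of the structure map algebraMap ℝ → Cl(Q), and B·(involute B) = (involute B)·B. -/
open CliffordAlgebra

theorem stmt_5 (V : Type*) [AddCommGroup V] [Module ℝ V]
    (hV : Module.finrank ℝ V = 1) (Q : QuadraticForm ℝ V)
    (B : CliffordAlgebra Q) :
    B * involute B ∈ Set.range (algebraMap ℝ (CliffordAlgebra Q)) ∧
      B * involute B = involute B * B := by
  have hfd : FiniteDimensional ℝ V := Module.finite_of_finrank_eq_succ hV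
  let b : Module.Basis (Fin 1) ℝ V := Module.finBasisOfFinrankEq ℝ V hV
  set v : V := b 0 with hv
  have hrep : ∀ m : V, ∃ x : ℝ, m = x • v := by
    intro m
    refine ⟨b.repr m 0, ?_⟩
    have := b.sum_repr m
    simpa [Fin.sum_univ_one] using this.symm
  have hu : ι Q v * ι Q v = algebraMap ℝ _ (Q v) := ι_sq_scalar Q v
  -- every element of the Clifford algebra has the form a + ι (x • v)
  have key : ∀ C : CliffordAlgebra Q, ∃ (a x : ℝ),
      C = algebraMap ℝ _ a + ι Q (x • v) := by
    intro C
    induction C using CliffordAlgebra.induction with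
    | algebraMap r => exact ⟨r, 0, by simp⟩
    | ι m =>
      obtain ⟨x, hx⟩ := hrep m
      exact ⟨0, x, by simp [hx]⟩
    | mul c d hc hd =>
      obtain ⟨a, x, rfl⟩ := hc
      obtain ⟨c, y, rfl⟩ := hd
      refine ⟨a * c + x * y * Q v, a * y + c * x, ?_⟩
      simp only [map_smul, Algebra.algebraMap_eq_smul_one, mul_add, add_mul,
        smul_mul_assoc, mul_smul_comm, smul_smul, one_mul, mul_one, hu]
      module
    | add c d hc hd =>
      obtain ⟨a, x, rfl⟩ := hc
      obtain ⟨c, y, rfl⟩ := hd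
      exact ⟨a + c, x + y, by rw [map_add, add_smul, map_add]; abel⟩
  obtain ⟨a, x, rfl⟩ := key B
  have hQ : Q (x • v) = x * x * Q v := by
    rw [QuadraticMap.map_smul, smul_eq_mul]
  have h1 : (algebraMap ℝ (CliffordAlgebra Q) a + ι Q (x • v)) *
      involute (algebraMap ℝ (CliffordAlgebra Q) a + ι Q (x • v)) =
      algebraMap ℝ _ (a * a - Q (x • v)) := by
    simp only [map_add, map_one, involute_ι, AlgHom.commutes, map_smul, hQ,
      Algebra.algebraMap_eq_smul_one, mul_add, add_mul, mul_neg, neg_mul,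
      smul_mul_assoc, mul_smul_comm, smul_smul, one_mul, mul_one, hu]
    module
  have h2 : involute (algebraMap ℝ (CliffordAlgebra Q) a + ι Q (x • v)) *
      (algebraMap ℝ (CliffordAlgebra Q) a + ι Q (x • v)) =
      algebraMap ℝ _ (a * a - Q (x • v)) := by
    simp only [map_add, map_one, involute_ι, AlgHom.commutes, map_smul, hQ,
      Algebra.algebraMap_eq_smul_one, mul_add, add_mul, mul_neg, neg_mul,
      smul_mul_assoc, mul_smul_comm, smul_smul, one_mul, mul_one, hu]
    module
  exact ⟨⟨_, h1.symm⟩, h1.trans h2.symm⟩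
end

section
/- Let V be a real vector space with finrank V = 1, Q a quadratic form on V, and A, B, C elements of the Clifford algebra Cl(Q). Set D := A − B and suppose D·(involute D) = algebraMap q for some real number q ≠ 0. Then X := q⁻¹ • ((involute D)·C) is the unique element of Cl(Q) satisfying A·X − X·B = C. -/
open CliffordAlgebra

theorem stmt_6 (V : Type*) [AddCommGroup V] [Module ℝ V]
    (hV : Module.finrank ℝ V = 1) (Q : QuadraticForm ℝ V)
    (A B C : CliffordAlgebra Q) (D : CliffordAlgebra Q) (hD : D = A - B)
    (q : ℝ) (hq : q ≠ 0)
    (hdet : D * involute D = algebraMap ℝ (CliffordAlgebra Q) q) :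
    A * (q⁻¹ • (involute D * C)) - (q⁻¹ • (involute D * C)) * B = C ∧
      ∀ X : CliffordAlgebra Q, A * X - X * B = C → X = q⁻¹ • (involute D * C) := by
  obtain ⟨v, -, hv⟩ := finrank_eq_one_iff'.mp hV
  -- the Clifford algebra is commutative
  have hcommι : ∀ x : CliffordAlgebra Q, ∀ w : V, Commute x (ι Q w) := by
    intro x
    induction x using CliffordAlgebra.induction with
    | algebraMap r => exact fun w => (Algebra.commutes r _)
    | ι u =>
        intro w
        obtain ⟨c, hc⟩ := hv u
        obtain ⟨d, hd⟩ := hv w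
        subst hc hd
        simp only [map_smul, Commute, SemiconjBy]
        rw [smul_mul_smul_comm, smul_mul_smul_comm, mul_comm d c]
    | mul a b ha hb => exact fun w => (ha w).mul_left (hb w)
    | add a b ha hb => exact fun w => (ha w).add_left (hb w)
  have hcomm : ∀ x y : CliffordAlgebra Q, x * y = y * x := by
    intro x y
    induction y using CliffordAlgebra.induction with
    | algebraMap r => exact (Algebra.commutes r x).symm
    | ι w => exact hcommι x w
    | mul a b ha hb => rw [← mul_assoc, ha, mul_assoc, hb, mul_assoc]
    | add a b ha hb => rw [mul_add, add_mul, ha, hb]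
  have key : ∀ X : CliffordAlgebra Q, A * X - X * B = D * X := by
    intro X
    rw [hD, sub_mul, hcomm X B]
  have hDX : D * (q⁻¹ • (involute D * C)) = C := by
    rw [mul_smul_comm, ← mul_assoc, hdet, Algebra.algebraMap_eq_smul_one,
      smul_mul_assoc, one_mul, smul_smul, inv_mul_cancel₀ hq, one_smul]
  refine ⟨by rw [key, hDX], fun X hX => ?_⟩
  rw [key] at hX
  calc X = q⁻¹ • (involute D * D) * X := by
            rw [hcomm (involute D) D, hdet, Algebra.algebraMap_eq_smul_one,
              smul_smul, inv_mul_cancel₀ hq, one_smul, one_mul]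
    _ = q⁻¹ • (involute D * C) := by
            rw [smul_mul_assoc, mul_assoc, hX]
end

section
/- Let V be a real vector space with finrank V = 2 and Q a quadratic form on V. Then for every B in the Clifford algebra Cl(Q), the element B + involute (reverse B) lies in the range of the structure map algebraMap ℝ → Cl(Q). -/
open CliffordAlgebra

theorem stmt_7 (V : Type*) [AddCommGroup V] [Module ℝ V]
    (hV : Module.finrank ℝ V = 2) (Q : QuadraticForm ℝ V)
    (B : CliffordAlgebra Q) :
    B + involute (reverse B) ∈ Set.range (algebraMap ℝ (CliffordAlgebra Q)) := by
  have : Module.Finite ℝ V := Module.finite_of_finrank_eq_succ hV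
  let b : Module.Basis (Fin 2) ℝ V := Module.finBasisOfFinrankEq ℝ V hV
  set e1 := b 0 with he1
  set e2 := b 1 with he2
  set x1 := ι Q e1 with hx1
  set x2 := ι Q e2 with hx2
  let P : Submodule ℝ (CliffordAlgebra Q) :=
    Submodule.span ℝ {1, x1, x2, x1 * x2}
  have h1 : (1 : CliffordAlgebra Q) ∈ P := Submodule.subset_span (by simp)
  have hm1 : x1 ∈ P := Submodule.subset_span (by simp)
  have hm2 : x2 ∈ P := Submodule.subset_span (by simp)
  have hm12 : x1 * x2 ∈ P := Submodule.subset_span (by simp)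
  have sq1 : x1 * x1 = algebraMap ℝ _ (Q e1) := ι_sq_scalar Q e1
  have sq2 : x2 * x2 = algebraMap ℝ _ (Q e2) := ι_sq_scalar Q e2
  have swap : x2 * x1 = algebraMap ℝ _ (QuadraticMap.polar Q e1 e2) - x1 * x2 := by
    rw [eq_sub_iff_add_eq, add_comm]
    exact ι_mul_ι_add_swap e1 e2
  have halg : ∀ r : ℝ, (algebraMap ℝ (CliffordAlgebra Q) r) ∈ P := fun r => by
    rw [Algebra.algebraMap_eq_smul_one]; exact P.smul_mem r h1
  have halgmul : ∀ (r : ℝ) (x : CliffordAlgebra Q), x ∈ P →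
      algebraMap ℝ (CliffordAlgebra Q) r * x ∈ P := fun r x hx => by
    rw [← Algebra.smul_def]
    exact P.smul_mem r hx
  have q : x1 * x2 * (x1 * x2) =
      algebraMap ℝ _ (QuadraticMap.polar Q e1 e2) * (x1 * x2) -
        algebraMap ℝ _ (Q e1 * Q e2) := by
    have h : x1 * x2 * (x1 * x2) = x1 * (x2 * x1) * x2 := by noncomm_ring
    rw [h, swap, mul_sub, sub_mul]
    congr 1
    · rw [← Algebra.commutes, mul_assoc]
    · rw [map_mul, ← sq1, ← sq2]
      noncomm_ring
  have hmulalg : ∀ (r : ℝ), ∀ x ∈ P, x * algebraMap ℝ (CliffordAlgebra Q) r ∈ P :=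
    fun r x hx => by
    rw [← Algebra.commutes, ← Algebra.smul_def]
    exact P.smul_mem r hx
  have hmulP : ∀ x ∈ P, ∀ y ∈ P, x * y ∈ P := by
    intro x hx y hy
    induction hx using Submodule.span_induction generalizing y with
    | mem x hxmem =>
      induction hy using Submodule.span_induction with
      | mem y hymem =>
        simp only [Set.mem_insert_iff, Set.mem_singleton_iff] at hxmem hymem
        rcases hxmem with rfl | rfl | rfl | rfl <;>
          rcases hymem with rfl | rfl | rfl | rfl <;>
          (try rw [one_mul]) <;> (try rw [mul_one])
        · exact h1
        · exact hm1
        · exact hm2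
        · exact hm12
        · exact hm1
        · rw [sq1]; exact halg _
        · exact hm12
        · rw [← mul_assoc, sq1]; exact halgmul _ _ hm2
        · exact hm2
        · rw [swap]; exact P.sub_mem (halg _) hm12
        · rw [sq2]; exact halg _
        · rw [← mul_assoc, swap, sub_mul, mul_assoc, sq2]
          exact P.sub_mem (halgmul _ _ hm2) (hmulalg _ _ hm1)
        · exact hm12
        · rw [mul_assoc, swap, mul_sub, ← mul_assoc x1 x1 x2, sq1]
          exact P.sub_mem (hmulalg _ _ hm1) (halgmul _ _ hm2)
        · rw [mul_assoc, sq2]; exact hmulalg _ _ hm1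
        · rw [q]; exact P.sub_mem (halgmul _ _ hm12) (halg _)
      | zero => simpa using P.zero_mem
      | add a c _ _ ha hc => rw [mul_add]; exact P.add_mem ha hc
      | smul r a _ ha => rw [mul_smul_comm]; exact P.smul_mem r ha
    | zero => simpa using P.zero_mem
    | add a c _ _ ha hc => rw [add_mul]; exact P.add_mem (ha y hy) (hc y hy)
    | smul r a _ ha => rw [smul_mul_assoc]; exact P.smul_mem r (ha y hy)
  have hP : ∀ x : CliffordAlgebra Q, x ∈ P := by
    intro x
    induction x using CliffordAlgebra.induction with
    | algebraMap r => exact halg r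
    | ι v =>
      have hv : v = b.repr v 0 • e1 + b.repr v 1 • e2 := by
        have := b.sum_repr v
        rw [Fin.sum_univ_two] at this
        exact this.symm
      rw [hv, map_add, map_smul, map_smul]
      exact P.add_mem (P.smul_mem _ hm1) (P.smul_mem _ hm2)
    | mul x y hx hy => exact hmulP x hx y hy
    | add x y hx hy => exact P.add_mem hx hy
  have key : ∀ x ∈ P, x + involute (reverse x) ∈
      Set.range (algebraMap ℝ (CliffordAlgebra Q)) := by
    intro x hx
    induction hx using Submodule.span_induction with
    | mem x hxmem =>
      simp only [Set.mem_insert_iff, Set.mem_singleton_iff] at hxmem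
      rcases hxmem with rfl | rfl | rfl | rfl
      · exact ⟨1 + 1, by simp [map_add]⟩
      · exact ⟨0, by simp [hx1]⟩
      · exact ⟨0, by simp [hx2]⟩
      · refine ⟨QuadraticMap.polar Q e1 e2, ?_⟩
        rw [reverse.map_mul, reverse_ι, reverse_ι, map_mul, involute_ι, involute_ι,
          neg_mul_neg]
        exact (ι_mul_ι_add_swap e1 e2).symm
    | zero => exact ⟨0, by simp⟩
    | add a c _ _ ha hc =>
      obtain ⟨r, hr⟩ := ha
      obtain ⟨s, hs⟩ := hc
      exact ⟨r + s, by rw [map_add, hr, hs, map_add, map_add]; abel⟩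
    | smul r a _ ha =>
      obtain ⟨s, hs⟩ := ha
      refine ⟨r * s, ?_⟩
      rw [map_mul, ← Algebra.smul_def, hs, smul_add, map_smul, map_smul]
  exact key B (hP B)
end

section
/- Let V be a real vector space with finrank V = 2 and Q a quadratic form on V. Then for every B in the Clifford algebra Cl(Q), the product B·(involute (reverse B)) lies in the range of the structure map algebraMap ℝ → Cl(Q), and moreover B·(involute (reverse B)) = (involute (reverse B))·B. -/
open CliffordAlgebra

theorem stmt_8 (V : Type*) [AddCommGroup V] [Module ℝ V]
    (hV : Module.finrank ℝ V = 2) (Q : QuadraticForm ℝ V)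
    (B : CliffordAlgebra Q) :
    B * involute (reverse B) ∈ Set.range (algebraMap ℝ (CliffordAlgebra Q)) ∧
      B * involute (reverse B) = involute (reverse B) * B := by
  have hfd : Module.Finite ℝ V := Module.finite_of_finrank_pos (by omega)
  let bV : Module.Basis (Fin 2) ℝ V := Module.finBasisOfFinrankEq ℝ V hV
  set x := ι Q (bV 0) with hxdef
  set y := ι Q (bV 1) with hydef
  set q1 := Q (bV 0) with hq1
  set q2 := Q (bV 1) with hq2
  set p := QuadraticMap.polar Q (bV 0) (bV 1) with hp
  have hx : x * x = q1 • (1 : CliffordAlgebra Q) := by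
    rw [hxdef, ι_sq_scalar, Algebra.algebraMap_eq_smul_one]
  have hy : y * y = q2 • (1 : CliffordAlgebra Q) := by
    rw [hydef, ι_sq_scalar, Algebra.algebraMap_eq_smul_one]
  have hyx : y * x = p • (1 : CliffordAlgebra Q) - x * y := by
    rw [hxdef, hydef, ι_mul_ι_comm, Algebra.algebraMap_eq_smul_one, hp,
      QuadraticMap.polar_comm]
  have hxx : ∀ t : CliffordAlgebra Q, x * (x * t) = q1 • t := fun t => by
    rw [← mul_assoc, hx, smul_mul_assoc, one_mul]
  have hyy : ∀ t : CliffordAlgebra Q, y * (y * t) = q2 • t := fun t => by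
    rw [← mul_assoc, hy, smul_mul_assoc, one_mul]
  have hyxt : ∀ t : CliffordAlgebra Q, y * (x * t) = p • t - x * (y * t) := fun t => by
    rw [← mul_assoc, hyx, sub_mul, smul_mul_assoc, one_mul, mul_assoc]
  set v : Fin 4 → CliffordAlgebra Q := ![1, x, y, x * y] with hv
  set S : Submodule ℝ (CliffordAlgebra Q) := Submodule.span ℝ (Set.range v) with hS
  have hmem : ∀ i, v i ∈ S := fun i => Submodule.subset_span ⟨i, rfl⟩
  have h1S : (1 : CliffordAlgebra Q) ∈ S := hmem 0
  have hxS : x ∈ S := hmem 1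
  have hyS : y ∈ S := hmem 2
  have hxyS : x * y ∈ S := hmem 3
  have hLx : ∀ t ∈ S, x * t ∈ S := by
    intro t ht
    induction ht using Submodule.span_induction with
    | mem g hg =>
      obtain ⟨i, rfl⟩ := hg
      fin_cases i
      · simpa [v] using hxS
      · simpa [v, hx] using S.smul_mem q1 h1S
      · simpa [v] using hxyS
      · simpa [v, hxx] using S.smul_mem q1 hyS
    | zero => simpa using S.zero_mem
    | add a b _ _ ha hb => simpa [mul_add] using S.add_mem ha hb
    | smul r a _ ha => simpa [mul_smul_comm] using S.smul_mem r ha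
  have hLy : ∀ t ∈ S, y * t ∈ S := by
    intro t ht
    induction ht using Submodule.span_induction with
    | mem g hg =>
      obtain ⟨i, rfl⟩ := hg
      fin_cases i
      · simpa [v] using hyS
      · simpa [v, hyx] using S.sub_mem (S.smul_mem p h1S) hxyS
      · simpa [v, hy] using S.smul_mem q2 h1S
      · simpa [v, hyxt, hy, mul_smul_comm] using
          S.sub_mem (S.smul_mem p hyS) (S.smul_mem q2 hxS)
    | zero => simpa using S.zero_mem
    | add a b _ _ ha hb => simpa [mul_add] using S.add_mem ha hb
    | smul r a _ ha => simpa [mul_smul_comm] using S.smul_mem r ha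
  have hBS : B ∈ S := by
    induction B using CliffordAlgebra.induction with
    | algebraMap r =>
      rw [Algebra.algebraMap_eq_smul_one]; exact S.smul_mem r h1S
    | ι m =>
      have : ι Q m = bV.repr m 0 • x + bV.repr m 1 • y := by
        conv_lhs => rw [← bV.sum_repr m]
        simp only [Fin.sum_univ_two, map_add, map_smul, hxdef, hydef]
      rw [this]
      exact S.add_mem (S.smul_mem _ hxS) (S.smul_mem _ hyS)
    | mul a b ha hb =>
      induction ha using Submodule.span_induction with
      | mem g hg =>
        obtain ⟨i, rfl⟩ := hg
        fin_cases i
        · simpa [v] using hb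
        · exact hLx _ hb
        · exact hLy _ hb
        · simpa [v, mul_assoc] using hLx _ (hLy _ hb)
      | zero => simpa using S.zero_mem
      | add a b _ _ ha hb => simpa [add_mul] using S.add_mem ha hb
      | smul r a _ ha => simpa [smul_mul_assoc] using S.smul_mem r ha
    | add a b ha hb => exact S.add_mem ha hb
  obtain ⟨c, hc⟩ := (Submodule.mem_span_range_iff_exists_fun ℝ).mp hBS
  rw [Fin.sum_univ_four] at hc
  simp only [hv, Matrix.cons_val_zero, Matrix.cons_val_one, Matrix.head_cons,
    Matrix.cons_val_two, Matrix.tail_cons, Matrix.cons_val_three] at hc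
  have hconj : involute (reverse B) =
      (c 0 + c 3 * p) • (1 : CliffordAlgebra Q) - c 1 • x - c 2 • y - c 3 • (x * y) := by
    rw [← hc, hxdef, hydef]
    simp only [map_add, map_smul, reverse.map_one, reverse.map_mul, reverse_ι, map_one,
      map_mul, involute_ι, map_sub, neg_mul_neg, smul_smul]
    rw [← hxdef, ← hydef, hyx]
    module
  have hB : B = c 0 • (1 : CliffordAlgebra Q) + c 1 • x + c 2 • y + c 3 • (x * y) := hc.symm
  have hprod : B * involute (reverse B) =
      (c 0 * (c 0 + c 3 * p) - c 1 * c 1 * q1 - c 2 * c 2 * q2 - c 1 * c 2 * p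
        + c 3 * c 3 * (q1 * q2)) • (1 : CliffordAlgebra Q) := by
    rw [hconj, hB]
    simp only [mul_add, add_mul, mul_sub, sub_mul, smul_mul_assoc, mul_smul_comm,
      one_mul, mul_one, mul_assoc, hx, hy, hyx, hxx, hyy, hyxt, smul_sub, smul_add,
      smul_smul]
    module
  have hprod' : involute (reverse B) * B =
      (c 0 * (c 0 + c 3 * p) - c 1 * c 1 * q1 - c 2 * c 2 * q2 - c 1 * c 2 * p
        + c 3 * c 3 * (q1 * q2)) • (1 : CliffordAlgebra Q) := by
    rw [hconj, hB]
    simp only [mul_add, add_mul, mul_sub, sub_mul, smul_mul_assoc, mul_smul_comm,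
      one_mul, mul_one, mul_assoc, hx, hy, hyx, hxx, hyy, hyxt, smul_sub, smul_add,
      smul_smul]
    module
  refine ⟨⟨c 0 * (c 0 + c 3 * p) - c 1 * c 1 * q1 - c 2 * c 2 * q2 - c 1 * c 2 * p
      + c 3 * c 3 * (q1 * q2), ?_⟩, hprod.trans hprod'.symm⟩
  rw [hprod, Algebra.algebraMap_eq_smul_one]
end

section
/- Let V be a real vector space with finrank V = 2, Q a quadratic form on V, and B an element of the Clifford algebra Cl(Q). If B·(involute (reverse B)) = algebraMap q for some real number q ≠ 0, then B is a unit with two-sided inverse q⁻¹ • involute (reverse B); that is, B·(q⁻¹ • involute (reverse B)) = 1 and (q⁻¹ • involute (reverse B))·B = 1. -/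
open CliffordAlgebra

lemma clifford_fin (V : Type*) [AddCommGroup V] [Module ℝ V]
    (hV : Module.finrank ℝ V = 2) (Q : QuadraticForm ℝ V) :
    Module.Finite ℝ (CliffordAlgebra Q) := by
  have : FiniteDimensional ℝ V := FiniteDimensional.of_finrank_eq_succ hV
  let b : Module.Basis (Fin 2) ℝ V := Module.finBasisOfFinrankEq ℝ V hV
  set x0 := ι Q (b 0) with hx0
  set x1 := ι Q (b 1) with hx1
  set S : Submodule ℝ (CliffordAlgebra Q) :=
    Submodule.span ℝ {1, x0, x1, x0 * x1} with hS
  have h1 : (1 : CliffordAlgebra Q) ∈ S := Submodule.subset_span (by simp)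
  have hm0 : x0 ∈ S := Submodule.subset_span (by simp)
  have hm1 : x1 ∈ S := Submodule.subset_span (by simp)
  have hm01 : x0 * x1 ∈ S := Submodule.subset_span (by simp)
  -- closure under left multiplication by ι Q v
  have key : ∀ v : V, ∀ y ∈ S, ι Q v * y ∈ S := by
    intro v y hy
    -- write ι Q v as combination of x0, x1
    obtain ⟨c, hc⟩ : ∃ c : Fin 2 → ℝ, v = c 0 • b 0 + c 1 • b 1 := by
      refine ⟨fun i => b.repr v i, ?_⟩
      have := b.sum_repr v
      rw [Fin.sum_univ_two] at this
      exact this.symm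
    have hiv : ι Q v = (c 0) • x0 + (c 1) • x1 := by
      rw [hc, map_add, map_smul, map_smul]
    rw [hiv, add_mul, smul_mul_assoc, smul_mul_assoc]
    have l01 : x0 * y ∈ S ∧ x1 * y ∈ S := by
      induction hy using Submodule.span_induction with
      | mem z hz =>
        rcases hz with h | h | h | h <;> subst h
        · exact ⟨by simpa using hm0, by simpa using hm1⟩
        · constructor
          · rw [hx0, ι_sq_scalar, Algebra.algebraMap_eq_smul_one]
            exact S.smul_mem _ h1
          · rw [hx1, hx0, ι_mul_ι_comm]
            refine S.sub_mem ?_ hm01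
            rw [Algebra.algebraMap_eq_smul_one]
            exact S.smul_mem _ h1
        · constructor
          · exact hm01
          · rw [hx1, ι_sq_scalar, Algebra.algebraMap_eq_smul_one]
            exact S.smul_mem _ h1
        · constructor
          · rw [← mul_assoc, hx0, ι_sq_scalar, ← Algebra.smul_def]
            exact S.smul_mem _ hm1
          · rw [← mul_assoc, hx1, hx0, ι_mul_ι_comm, sub_mul, mul_assoc,
              ι_sq_scalar]
            refine S.sub_mem ?_ ?_
            · rw [← Algebra.smul_def]
              exact S.smul_mem _ hm1
            · rw [← Algebra.commutes, ← Algebra.smul_def]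
              exact S.smul_mem _ hm0
      | zero => constructor <;> simp
      | add a b _ _ ha hb =>
        exact ⟨by rw [mul_add]; exact S.add_mem ha.1 hb.1,
               by rw [mul_add]; exact S.add_mem ha.2 hb.2⟩
      | smul r a _ ha =>
        exact ⟨by rw [mul_smul_comm]; exact S.smul_mem r ha.1,
               by rw [mul_smul_comm]; exact S.smul_mem r ha.2⟩
    exact S.add_mem (S.smul_mem _ l01.1) (S.smul_mem _ l01.2)
  have top : ∀ x : CliffordAlgebra Q, ∀ y ∈ S, x * y ∈ S := by
    intro x
    induction x using CliffordAlgebra.induction with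
    | algebraMap r =>
      intro y hy
      rw [← Algebra.smul_def]
      exact S.smul_mem r hy
    | ι m => exact key m
    | mul a b ha hb => intro y hy; rw [mul_assoc]; exact ha _ (hb _ hy)
    | add a b ha hb => intro y hy; rw [add_mul]; exact S.add_mem (ha _ hy) (hb _ hy)
  have hStop : S = ⊤ := by
    rw [eq_top_iff]
    intro x _
    simpa using top x 1 h1
  have hfg : (⊤ : Submodule ℝ (CliffordAlgebra Q)).FG :=
    hStop ▸ Submodule.fg_span (Set.toFinite _)
  exact ⟨hfg⟩

theorem stmt_9 (V : Type*) [AddCommGroup V] [Module ℝ V]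
    (hV : Module.finrank ℝ V = 2) (Q : QuadraticForm ℝ V)
    (B : CliffordAlgebra Q) (q : ℝ) (hq : q ≠ 0)
    (hdet : B * involute (reverse B) = algebraMap ℝ (CliffordAlgebra Q) q) :
    B * (q⁻¹ • involute (reverse B)) = 1 ∧
      (q⁻¹ • involute (reverse B)) * B = 1 := by
  have hfin : Module.Finite ℝ (CliffordAlgebra Q) := clifford_fin V hV Q
  have h1 : B * (q⁻¹ • involute (reverse B)) = 1 := by
    rw [mul_smul_comm, hdet, Algebra.smul_def, ← map_mul, inv_mul_cancel₀ hq, map_one]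
  refine ⟨h1, ?_⟩
  have hf : LinearMap.mulLeft ℝ B * LinearMap.mulLeft ℝ (q⁻¹ • involute (reverse B)) = 1 := by
    rw [Module.End.mul_eq_comp, ← LinearMap.mulLeft_mul, h1, LinearMap.mulLeft_one,
      Module.End.one_eq_id]
  have hg := mul_eq_one_comm.mp hf
  have := congrArg (fun f : Module.End ℝ (CliffordAlgebra Q) => f 1) hg
  simpa using this
end

section
/- Let V be a real vector space with finrank V = 2, Q a quadratic form on V, and A, B, C elements of the Clifford algebra Cl(Q). Set B̄ := involute (reverse B) and D := A² − A·(B + B̄) + B·B̄. If D·(involute (reverse D)) = algebraMap q for some real number q ≠ 0, then X := q⁻¹ • ((involute (reverse D))·(A·C − C·B̄)) is the unique element of Cl(Q) satisfying A·X − X·B = C. -/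
open CliffordAlgebra

section Aux

variable {V : Type*} [AddCommGroup V] [Module ℝ V] {Q : QuadraticForm ℝ V}

private lemma myconj_conj (x : CliffordAlgebra Q) :
    involute (reverse (involute (reverse x))) = x := by
  rw [reverse_involute, involute_involute, reverse_reverse]

private lemma myconj_mul (x y : CliffordAlgebra Q) :
    involute (reverse (x * y)) = involute (reverse y) * involute (reverse x) := by
  rw [reverse.map_mul, map_mul]

set_option maxHeartbeats 1000000 in
/-- In a Clifford algebra over a 2-dimensional space, `x + x̄` is a scalar. -/
private lemma conj_add_self (hV : Module.finrank ℝ V = 2) (x : CliffordAlgebra Q) :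
    ∃ r : ℝ, x + involute (reverse x) = algebraMap ℝ (CliffordAlgebra Q) r := by
  have : Module.Finite ℝ V := Module.finite_of_finrank_eq_succ hV
  let b := Module.finBasisOfFinrankEq ℝ V hV
  set u := ι Q (b 0) with hu
  set v := ι Q (b 1) with hv
  set S : Submodule ℝ (CliffordAlgebra Q) := Submodule.span ℝ {1, u, v, u * v} with hS
  have m1 : (1 : CliffordAlgebra Q) ∈ S := Submodule.subset_span (by simp)
  have mu : u ∈ S := Submodule.subset_span (by simp)
  have mv : v ∈ S := Submodule.subset_span (by simp)
  have muv : u * v ∈ S := Submodule.subset_span (by simp)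
  have hA : ∀ r : ℝ, algebraMap ℝ (CliffordAlgebra Q) r ∈ S := fun r => by
    rw [Algebra.algebraMap_eq_smul_one]; exact S.smul_mem r m1
  have hAM : ∀ (r : ℝ) (z : CliffordAlgebra Q), z ∈ S →
      algebraMap ℝ (CliffordAlgebra Q) r * z ∈ S := fun r z hz => by
    rw [← Algebra.smul_def]; exact S.smul_mem r hz
  have E1 : u * u = algebraMap ℝ _ (Q (b 0)) := ι_sq_scalar Q _
  have E2 : v * v = algebraMap ℝ _ (Q (b 1)) := ι_sq_scalar Q _
  have E3 : v * u = algebraMap ℝ _ (QuadraticMap.polar Q (b 1) (b 0)) - u * v :=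
    ι_mul_ι_comm _ _
  set p := QuadraticMap.polar Q (b 1) (b 0)
  set q0 := Q (b 0)
  set q1 := Q (b 1)
  have F1 : u * (u * v) = algebraMap ℝ _ q0 * v := by rw [← mul_assoc, E1]
  have F2 : (u * v) * v = algebraMap ℝ _ q1 * u := by
    rw [mul_assoc, E2, ← Algebra.commutes]
  have F3 : v * (u * v) = algebraMap ℝ _ p * v - algebraMap ℝ _ q1 * u := by
    rw [← mul_assoc, E3, sub_mul, F2]
  have F4 : (u * v) * u = algebraMap ℝ _ p * u - algebraMap ℝ _ q0 * v := by
    rw [mul_assoc, E3, mul_sub, ← Algebra.commutes, ← mul_assoc, E1]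
  have F5 : (u * v) * (u * v) =
      algebraMap ℝ _ p * (u * v) - algebraMap ℝ _ q1 * algebraMap ℝ _ q0 := by
    rw [mul_assoc, F3, mul_sub, ← mul_assoc, ← mul_assoc, ← Algebra.commutes p u,
      ← Algebra.commutes q1 u, mul_assoc (algebraMap ℝ _ p) u v,
      mul_assoc (algebraMap ℝ _ q1) u u, E1]
  have hmul : ∀ x ∈ S, ∀ y ∈ S, x * y ∈ S := by
    intro x hx y hy
    induction hx, hy using Submodule.span_induction₂ with
    | mem_mem x y hx hy =>
      simp only [Set.mem_insert_iff, Set.mem_singleton_iff] at hx hy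
      rcases hx with rfl | rfl | rfl | rfl <;> rcases hy with rfl | rfl | rfl | rfl <;>
        (try simp only [one_mul, mul_one, E1, E2, E3, F1, F2, F3, F4, F5]) <;>
        first
          | exact m1 | exact mu | exact mv | exact muv | exact hA _
          | exact hAM _ _ mu | exact hAM _ _ mv | exact hAM _ _ muv
          | exact hAM _ _ (hA _)
          | exact sub_mem (hA _) muv
          | exact sub_mem (hAM _ _ mv) (hAM _ _ mu)
          | exact sub_mem (hAM _ _ mu) (hAM _ _ mv)
          | exact sub_mem (hAM _ _ muv) (hAM _ _ (hA _))
    | zero_left y hy => simp only [zero_mul]; exact S.zero_mem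
    | zero_right x hx => simp only [mul_zero]; exact S.zero_mem
    | add_left x y z hx hy hz h1 h2 => rw [add_mul]; exact add_mem h1 h2
    | add_right x y z hx hy hz h1 h2 => rw [mul_add]; exact add_mem h1 h2
    | smul_left r x y hx hy h => rw [smul_mul_assoc]; exact S.smul_mem r h
    | smul_right r x y hx hy h => rw [mul_smul_comm]; exact S.smul_mem r h
  have hspan : ∀ z : CliffordAlgebra Q, z ∈ S := by
    intro z
    induction z using CliffordAlgebra.induction with
    | algebraMap r => exact hA r
    | ι x =>
      have hx : (b.repr x 0) • b 0 + (b.repr x 1) • b 1 = x := by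
        have := b.sum_repr x
        rwa [Fin.sum_univ_two] at this
      rw [← hx, map_add, map_smul, map_smul]
      exact add_mem (S.smul_mem _ mu) (S.smul_mem _ mv)
    | mul a c ha hc => exact hmul a ha c hc
    | add a c ha hc => exact add_mem ha hc
  refine Submodule.span_induction ?_ ?_ ?_ ?_ (hspan x)
  · intro z hz
    simp only [Set.mem_insert_iff, Set.mem_singleton_iff] at hz
    rcases hz with rfl | rfl | rfl | rfl
    · exact ⟨2, by norm_num [map_ofNat]⟩
    · exact ⟨0, by simp [hu, reverse_ι, involute_ι]⟩
    · exact ⟨0, by simp [hv, reverse_ι, involute_ι]⟩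
    · refine ⟨QuadraticMap.polar Q (b 0) (b 1), ?_⟩
      rw [myconj_mul, reverse_ι, reverse_ι, involute_ι, involute_ι, neg_mul_neg]
      exact ι_mul_ι_add_swap _ _
  · exact ⟨0, by simp⟩
  · rintro x y hx hy ⟨r, hr⟩ ⟨r', hr'⟩
    refine ⟨r + r', ?_⟩
    rw [map_add, map_add, map_add, ← hr, ← hr']
    abel
  · rintro a x hx ⟨r, hr⟩
    refine ⟨a * r, ?_⟩
    rw [map_smul, map_smul, ← smul_add, hr, map_mul, ← Algebra.smul_def]

end Aux

theorem stmt_11 (V : Type*) [AddCommGroup V] [Module ℝ V]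
    (hV : Module.finrank ℝ V = 2) (Q : QuadraticForm ℝ V)
    (A B C : CliffordAlgebra Q) (D : CliffordAlgebra Q)
    (hD : D = A ^ 2 - A * (B + involute (reverse B)) + B * involute (reverse B))
    (q : ℝ) (hq : q ≠ 0)
    (hdet : D * involute (reverse D) = algebraMap ℝ (CliffordAlgebra Q) q) :
    A * (q⁻¹ • (involute (reverse D) * (A * C - C * involute (reverse B)))) -
        (q⁻¹ • (involute (reverse D) * (A * C - C * involute (reverse B)))) * B = C ∧
      ∀ X : CliffordAlgebra Q, A * X - X * B = C →
        X = q⁻¹ • (involute (reverse D) * (A * C - C * involute (reverse B))) := by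
  set Bb := involute (reverse B) with hBb
  set Db := involute (reverse D) with hDb
  obtain ⟨t, ht⟩ := conj_add_self hV B
  rw [← hBb] at ht
  have ht2 : B + Bb = t • (1 : CliffordAlgebra Q) := by
    rw [ht, Algebra.algebraMap_eq_smul_one]
  obtain ⟨n2, hn2⟩ := conj_add_self hV (B * Bb)
  have hfix : involute (reverse (B * Bb)) = B * Bb := by
    rw [myconj_mul, hBb, myconj_conj, ← hBb]
  rw [hfix] at hn2
  obtain ⟨n, hn⟩ : ∃ n : ℝ, B * Bb = n • (1 : CliffordAlgebra Q) := by
    refine ⟨n2 / 2, smul_right_injective (CliffordAlgebra Q)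
      (two_ne_zero : (2 : ℝ) ≠ 0) ?_⟩
    show (2 : ℝ) • (B * Bb) = (2 : ℝ) • ((n2 / 2) • (1 : CliffordAlgebra Q))
    rw [two_smul, hn2, smul_smul, Algebra.algebraMap_eq_smul_one]
    congr 1
    ring
  have hBbe : Bb = t • 1 - B := by rw [eq_sub_iff_add_eq, add_comm]; exact ht2
  have hcommB : Bb * B = B * Bb := by
    rw [hBbe, sub_mul, mul_sub, smul_mul_assoc, mul_smul_comm, one_mul, mul_one]
  have hBbB : Bb * B = n • (1 : CliffordAlgebra Q) := hcommB.trans hn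
  have hD2 : D = A * A - t • A + n • 1 := by
    rw [hD, ht2, hn, pow_two, mul_smul_comm, mul_one]
  have hDA : D * A = A * D := by
    rw [hD2]
    simp only [sub_mul, add_mul, mul_sub, mul_add, smul_mul_assoc, mul_smul_comm,
      one_mul, mul_one, mul_assoc]
  obtain ⟨s, hs⟩ := conj_add_self hV D
  rw [← hDb] at hs
  have hs2 : D + Db = s • (1 : CliffordAlgebra Q) := by
    rw [hs, Algebra.algebraMap_eq_smul_one]
  have hDbe : Db = s • 1 - D := by rw [eq_sub_iff_add_eq, add_comm]; exact hs2
  have hDbD : Db * D = algebraMap ℝ (CliffordAlgebra Q) q := by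
    calc Db * D = D * Db := by
          rw [hDbe, sub_mul, mul_sub, smul_mul_assoc, mul_smul_comm, one_mul, mul_one]
      _ = _ := hdet
  have key : ∀ X : CliffordAlgebra Q,
      D * X = A * (A * X - X * B) - (A * X - X * B) * Bb := by
    intro X
    have e1 : X * B + X * Bb = t • X := by rw [← mul_add, ht2, mul_smul_comm, mul_one]
    have e2 : X * (B * Bb) = n • X := by rw [hn, mul_smul_comm, mul_one]
    have expand : A * (A * X - X * B) - (A * X - X * B) * Bb
        = A * (A * X) - A * (X * B + X * Bb) + X * (B * Bb) := by
      simp only [mul_sub, sub_mul, mul_add, mul_assoc]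
      abel
    rw [expand, e1, e2, mul_smul_comm, hD2]
    simp only [sub_mul, add_mul, smul_mul_assoc, one_mul, mul_assoc]
  have hDunit : IsUnit D := by
    refine ⟨⟨D, q⁻¹ • Db, ?_, ?_⟩, rfl⟩
    · rw [mul_smul_comm, hdet, Algebra.algebraMap_eq_smul_one, smul_smul,
        inv_mul_cancel₀ hq, one_smul]
    · rw [smul_mul_assoc, hDbD, Algebra.algebraMap_eq_smul_one, smul_smul,
        inv_mul_cancel₀ hq, one_smul]
  set X₀ := q⁻¹ • (Db * (A * C - C * Bb)) with hX₀
  have hDX₀ : D * X₀ = A * C - C * Bb := by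
    rw [hX₀, mul_smul_comm, ← mul_assoc, hdet, ← Algebra.smul_def, smul_smul,
      inv_mul_cancel₀ hq, one_smul]
  constructor
  · -- existence
    have hsym : A * (A * C - C * Bb) - (A * C - C * Bb) * B
        = A * (A * C - C * B) - (A * C - C * B) * Bb := by
      simp only [mul_sub, sub_mul, mul_assoc, hn, hBbB, mul_smul_comm, mul_one]
      abel
    have hcalc : D * (A * X₀ - X₀ * B) = D * C := by
      rw [mul_sub, ← mul_assoc, ← mul_assoc, hDA, mul_assoc, hDX₀, hsym, ← key C]
    exact hDunit.mul_left_cancel hcalc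
  · -- uniqueness
    intro X hX
    have h1 : D * X = A * C - C * Bb := by rw [key X, hX]
    have h2 : algebraMap ℝ (CliffordAlgebra Q) q * X = Db * (A * C - C * Bb) := by
      rw [← hDbD, mul_assoc, h1]
    rw [← Algebra.smul_def] at h2
    rw [hX₀, ← h2, smul_smul, inv_mul_cancel₀ hq, one_smul]
end

section
/- Let V be a real vector space with finrank V = 3 and Q a quadratic form on V. Then for every B in the Clifford algebra Cl(Q), the element B + involute (reverse B) lies in the center of Cl(Q). -/
open CliffordAlgebra

section AuxRing

variable {A : Type*} [Ring A]

private lemma aux_comm1 {a b c : A} (hba : b * a = -(a * b)) (hca : c * a = -(a * c)) :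
    a * (a * (b * c)) = a * (b * c) * a := by
  have h1 : a * (b * c) * a = (a * b) * (c * a) := by noncomm_ring
  rw [h1, hca]
  have h2 : (a * b) * -(a * c) = -((a * (b * a)) * c) := by noncomm_ring
  rw [h2, hba]
  noncomm_ring

private lemma aux_comm2 {a b c : A} (hba : b * a = -(a * b)) (hcb : c * b = -(b * c)) :
    b * (a * (b * c)) = a * (b * c) * b := by
  have h1 : b * (a * (b * c)) = (b * a) * (b * c) := by noncomm_ring
  rw [h1, hba]
  have h2 : a * (b * c) * b = (a * b) * (c * b) := by noncomm_ring
  rw [h2, hcb]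
  noncomm_ring

private lemma aux_comm3 {a b c : A} (hca : c * a = -(a * c)) (hcb : c * b = -(b * c)) :
    c * (a * (b * c)) = a * (b * c) * c := by
  have h1 : c * (a * (b * c)) = ((c * a) * b) * c := by noncomm_ring
  rw [h1, hca]
  have h2 : ((-(a * c)) * b) * c = -((a * (c * b)) * c) := by noncomm_ring
  rw [h2, hcb]
  noncomm_ring

private lemma aux_sq_left {a q x : A} (ha : a * a = q) : a * (a * x) = q * x := by
  rw [← mul_assoc, ha]

private lemma aux_swap_sq {a b q : A} (hba : b * a = -(a * b)) (hb : b * b = q)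
    (hq : ∀ x, q * x = x * q) : b * (a * b) = -(q * a) := by
  have h1 : b * (a * b) = (b * a) * b := by noncomm_ring
  rw [h1, hba]
  have h2 : (-(a * b)) * b = -(a * (b * b)) := by noncomm_ring
  rw [h2, hb, ← hq]

private lemma aux_c_ab {a b c : A} (hca : c * a = -(a * c)) (hcb : c * b = -(b * c)) :
    c * (a * b) = a * (b * c) := by
  have h1 : c * (a * b) = (c * a) * b := by noncomm_ring
  rw [h1, hca]
  have h2 : (-(a * c)) * b = -(a * (c * b)) := by noncomm_ring
  rw [h2, hcb]
  noncomm_ring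

private lemma aux_b_ac {a b c : A} (hba : b * a = -(a * b)) :
    b * (a * c) = -((a * b) * c) := by
  have h1 : b * (a * c) = (b * a) * c := by noncomm_ring
  rw [h1, hba]
  noncomm_ring

private lemma aux_b_abc {a b c q : A} (hba : b * a = -(a * b)) (hb : b * b = q)
    (hq : ∀ x, q * x = x * q) : b * (a * (b * c)) = -(q * (a * c)) := by
  have h1 : b * (a * (b * c)) = (b * a) * (b * c) := by noncomm_ring
  rw [h1, hba]
  have h2 : (-(a * b)) * (b * c) = -((a * (b * b)) * c) := by noncomm_ring
  rw [h2, hb, ← hq]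
  noncomm_ring

private lemma aux_c_abc {a b c q : A} (hca : c * a = -(a * c)) (hcb : c * b = -(b * c))
    (hc : c * c = q) (hq : ∀ x, q * x = x * q) : c * (a * (b * c)) = q * (a * b) := by
  have h1 : c * (a * (b * c)) = ((c * a) * b) * c := by noncomm_ring
  rw [h1, hca]
  have h2 : ((-(a * c)) * b) * c = -((a * (c * b)) * c) := by noncomm_ring
  rw [h2, hcb]
  have h3 : -((a * -(b * c)) * c) = a * (b * (c * c)) := by noncomm_ring
  rw [h3, hc, ← hq b, ← mul_assoc, ← hq a, mul_assoc]

private lemma aux_rev3 {a b c : A} (hba : b * a = -(a * b)) (hca : c * a = -(a * c)) :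
    (b * c) * a = a * (b * c) := by
  have h1 : (b * c) * a = b * (c * a) := by noncomm_ring
  rw [h1, hca]
  have h2 : b * -(a * c) = -((b * a) * c) := by noncomm_ring
  rw [h2, hba]
  noncomm_ring

end AuxRing

theorem stmt_12 (V : Type*) [AddCommGroup V] [Module ℝ V]
    (hV : Module.finrank ℝ V = 3) (Q : QuadraticForm ℝ V)
    (B : CliffordAlgebra Q) :
    B + involute (reverse B) ∈ Subalgebra.center ℝ (CliffordAlgebra Q) := by
  haveI : FiniteDimensional ℝ V := FiniteDimensional.of_finrank_eq_succ (n := 2) hV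
  haveI : Invertible (2 : ℝ) := invertibleOfNonzero two_ne_zero
  obtain ⟨v, hv⟩ := LinearMap.BilinForm.exists_orthogonal_basis
    (QuadraticForm.associated_isSymm ℝ Q)
  set b : Module.Basis (Fin 3) ℝ V := v.reindex (finCongr hV) with hbdef
  have hb : ∀ i j : Fin 3, i ≠ j → Q.IsOrtho (b i) (b j) := by
    intro i j hij
    have hij' : (finCongr hV).symm i ≠ (finCongr hV).symm j := fun h => hij (by
      simpa using congrArg (finCongr hV) h)
    have := hv hij'
    rw [hbdef]
    simp only [Module.Basis.reindex_apply]
    exact (QuadraticMap.associated_isOrtho (Q := Q)).mp this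
  have h10 : ι Q (b 1) * ι Q (b 0) = -(ι Q (b 0) * ι Q (b 1)) :=
    ι_mul_ι_comm_of_isOrtho (hb 1 0 (by decide))
  have h20 : ι Q (b 2) * ι Q (b 0) = -(ι Q (b 0) * ι Q (b 2)) :=
    ι_mul_ι_comm_of_isOrtho (hb 2 0 (by decide))
  have h21 : ι Q (b 2) * ι Q (b 1) = -(ι Q (b 1) * ι Q (b 2)) :=
    ι_mul_ι_comm_of_isOrtho (hb 2 1 (by decide))
  have s0 : ι Q (b 0) * ι Q (b 0) = algebraMap ℝ _ (Q (b 0)) := ι_sq_scalar Q (b 0)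
  have s1 : ι Q (b 1) * ι Q (b 1) = algebraMap ℝ _ (Q (b 1)) := ι_sq_scalar Q (b 1)
  have s2 : ι Q (b 2) * ι Q (b 2) = algebraMap ℝ _ (Q (b 2)) := ι_sq_scalar Q (b 2)
  set gens : Set (CliffordAlgebra Q) :=
    {1, ι Q (b 0), ι Q (b 1), ι Q (b 2), ι Q (b 0) * ι Q (b 1), ι Q (b 0) * ι Q (b 2),
      ι Q (b 1) * ι Q (b 2), ι Q (b 0) * (ι Q (b 1) * ι Q (b 2))} with hgens
  set S : Submodule ℝ (CliffordAlgebra Q) := Submodule.span ℝ gens with hSdef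
  have hmem : ∀ x ∈ gens, x ∈ S := fun x hx => Submodule.subset_span hx
  have hm1 : (1 : CliffordAlgebra Q) ∈ S := hmem _ (by left; rfl)
  have hme0 : ι Q (b 0) ∈ S := hmem _ (by right; left; rfl)
  have hme1 : ι Q (b 1) ∈ S := hmem _ (by right; right; left; rfl)
  have hme2 : ι Q (b 2) ∈ S := hmem _ (by right; right; right; left; rfl)
  have hme01 : ι Q (b 0) * ι Q (b 1) ∈ S := hmem _ (by
    right; right; right; right; left; rfl)
  have hme02 : ι Q (b 0) * ι Q (b 2) ∈ S := hmem _ (by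
    right; right; right; right; right; left; rfl)
  have hme12 : ι Q (b 1) * ι Q (b 2) ∈ S := hmem _ (by
    right; right; right; right; right; right; left; rfl)
  have hme012 : ι Q (b 0) * (ι Q (b 1) * ι Q (b 2)) ∈ S := hmem _ (by
    right; right; right; right; right; right; right; rfl)
  have hq : ∀ (r : ℝ) (x : CliffordAlgebra Q), x ∈ S →
      algebraMap ℝ (CliffordAlgebra Q) r * x ∈ S := fun r x h => by
    rw [← Algebra.smul_def]; exact S.smul_mem r h
  have hcq : ∀ (r : ℝ) (x : CliffordAlgebra Q),
      algebraMap ℝ (CliffordAlgebra Q) r * x = x * algebraMap ℝ (CliffordAlgebra Q) r :=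
    fun r x => Algebra.commutes r x
  -- closure of S under left multiplication by the generators
  have key0 : ∀ s ∈ S, ι Q (b 0) * s ∈ S := by
    intro s hs
    induction hs using Submodule.span_induction with
    | mem g hg =>
      rcases hg with rfl | rfl | rfl | rfl | rfl | rfl | rfl | rfl
      · rw [mul_one]; exact hme0
      · rw [s0, Algebra.algebraMap_eq_smul_one]; exact S.smul_mem _ hm1
      · exact hme01
      · exact hme02
      · rw [aux_sq_left s0]; exact hq _ _ hme1
      · rw [aux_sq_left s0]; exact hq _ _ hme2
      · exact hme012
      · rw [aux_sq_left s0]; exact hq _ _ hme12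
    | zero => rw [mul_zero]; exact S.zero_mem
    | add x y hx hy ihx ihy => rw [mul_add]; exact S.add_mem ihx ihy
    | smul r x hx ih => rw [mul_smul_comm]; exact S.smul_mem r ih
  have key1 : ∀ s ∈ S, ι Q (b 1) * s ∈ S := by
    intro s hs
    induction hs using Submodule.span_induction with
    | mem g hg =>
      rcases hg with rfl | rfl | rfl | rfl | rfl | rfl | rfl | rfl
      · rw [mul_one]; exact hme1
      · rw [h10]; exact S.neg_mem hme01
      · rw [s1, Algebra.algebraMap_eq_smul_one]; exact S.smul_mem _ hm1
      · exact hme12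
      · rw [aux_swap_sq h10 s1 (hcq _)]; exact S.neg_mem (hq _ _ hme0)
      · rw [aux_b_ac h10]; exact S.neg_mem (by rw [mul_assoc]; exact hme012)
      · rw [aux_sq_left s1]; exact hq _ _ hme2
      · rw [aux_b_abc h10 s1 (hcq _)]; exact S.neg_mem (hq _ _ hme02)
    | zero => rw [mul_zero]; exact S.zero_mem
    | add x y hx hy ihx ihy => rw [mul_add]; exact S.add_mem ihx ihy
    | smul r x hx ih => rw [mul_smul_comm]; exact S.smul_mem r ih
  have key2 : ∀ s ∈ S, ι Q (b 2) * s ∈ S := by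
    intro s hs
    induction hs using Submodule.span_induction with
    | mem g hg =>
      rcases hg with rfl | rfl | rfl | rfl | rfl | rfl | rfl | rfl
      · rw [mul_one]; exact hme2
      · rw [h20]; exact S.neg_mem hme02
      · rw [h21]; exact S.neg_mem hme12
      · rw [s2, Algebra.algebraMap_eq_smul_one]; exact S.smul_mem _ hm1
      · rw [aux_c_ab h20 h21]; exact hme012
      · rw [aux_swap_sq h20 s2 (hcq _)]; exact S.neg_mem (hq _ _ hme0)
      · rw [aux_swap_sq h21 s2 (hcq _)]; exact S.neg_mem (hq _ _ hme1)
      · rw [aux_c_abc h20 h21 s2 (hcq _)]; exact hq _ _ hme01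
    | zero => rw [mul_zero]; exact S.zero_mem
    | add x y hx hy ihx ihy => rw [mul_add]; exact S.add_mem ihx ihy
    | smul r x hx ih => rw [mul_smul_comm]; exact S.smul_mem r ih
  -- closure of S under left multiplication by ι Q x for any x : V
  have keyι : ∀ (x : V), ∀ s ∈ S, ι Q x * s ∈ S := by
    intro x s hs
    have hx : x ∈ Submodule.span ℝ (Set.range b) := by rw [b.span_eq]; trivial
    induction hx using Submodule.span_induction with
    | mem y hy =>
      obtain ⟨i, rfl⟩ := hy
      fin_cases i
      · exact key0 s hs
      · exact key1 s hs
      · exact key2 s hs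
    | zero => rw [map_zero, zero_mul]; exact S.zero_mem
    | add y z hy hz ihy ihz => rw [map_add, add_mul]; exact S.add_mem ihy ihz
    | smul r y hy ih => rw [map_smul, smul_mul_assoc]; exact S.smul_mem r ih
  -- therefore S contains everything
  have htop : ∀ (x : CliffordAlgebra Q), ∀ s ∈ S, x * s ∈ S := by
    intro x
    induction x using CliffordAlgebra.induction with
    | algebraMap r => exact fun s hs => hq r s hs
    | ι y => exact keyι y
    | mul x y hx hy => intro s hs; rw [mul_assoc]; exact hx _ (hy _ hs)
    | add x y hx hy => intro s hs; rw [add_mul]; exact S.add_mem (hx s hs) (hy s hs)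
  have hBS : B ∈ S := by
    have := htop B 1 hm1
    rwa [mul_one] at this
  -- the top-grade monomial is central
  have hcommι : ∀ (x : V), ι Q x * (ι Q (b 0) * (ι Q (b 1) * ι Q (b 2))) =
      (ι Q (b 0) * (ι Q (b 1) * ι Q (b 2))) * ι Q x := by
    intro x
    have hx : x ∈ Submodule.span ℝ (Set.range b) := by rw [b.span_eq]; trivial
    induction hx using Submodule.span_induction with
    | mem y hy =>
      obtain ⟨i, rfl⟩ := hy
      fin_cases i
      · exact aux_comm1 h10 h20
      · exact aux_comm2 h10 h21
      · exact aux_comm3 h20 h21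
    | zero => rw [map_zero, zero_mul, mul_zero]
    | add y z hy hz ihy ihz => rw [map_add, add_mul, mul_add, ihy, ihz]
    | smul r y hy ih => rw [map_smul, smul_mul_assoc, mul_smul_comm, ih]
  have hmcentral : ι Q (b 0) * (ι Q (b 1) * ι Q (b 2)) ∈
      Subalgebra.center ℝ (CliffordAlgebra Q) := by
    rw [Subalgebra.mem_center_iff]
    intro y
    induction y using CliffordAlgebra.induction with
    | algebraMap r => rw [← hcq]
    | ι x => exact hcommι x
    | mul x y hx hy => rw [mul_assoc, hy, ← mul_assoc, hx, mul_assoc]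
    | add x y hx hy => rw [add_mul, mul_add, hx, hy]
  -- now conclude by span induction
  clear htop keyι key0 key1 key2
  induction hBS using Submodule.span_induction with
  | mem g hg =>
    rcases hg with rfl | rfl | rfl | rfl | rfl | rfl | rfl | rfl
    · simp only [reverse.map_one, map_one]
      exact add_mem (one_mem _) (one_mem _)
    · simp only [reverse_ι, involute_ι, add_neg_cancel]
      exact zero_mem _
    · simp only [reverse_ι, involute_ι, add_neg_cancel]
      exact zero_mem _
    · simp only [reverse_ι, involute_ι, add_neg_cancel]
      exact zero_mem _
    · simp only [reverse.map_mul, reverse_ι, map_mul, involute_ι, neg_mul_neg]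
      rw [h10]
      simp only [add_neg_cancel]
      exact zero_mem _
    · simp only [reverse.map_mul, reverse_ι, map_mul, involute_ι, neg_mul_neg]
      rw [h20]
      simp only [add_neg_cancel]
      exact zero_mem _
    · simp only [reverse.map_mul, reverse_ι, map_mul, involute_ι, neg_mul_neg]
      rw [h21]
      simp only [add_neg_cancel]
      exact zero_mem _
    · have hτ : involute (reverse (ι Q (b 0) * (ι Q (b 1) * ι Q (b 2)))) =
          ι Q (b 0) * (ι Q (b 1) * ι Q (b 2)) := by
        simp only [reverse.map_mul, reverse_ι, map_mul, involute_ι, neg_mul_neg, mul_neg,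
          neg_mul, neg_neg]
        rw [h21, neg_mul, neg_neg, aux_rev3 h10 h20]
      rw [hτ]
      exact add_mem hmcentral hmcentral
  | zero => simp only [map_zero, add_zero]; exact zero_mem _
  | add x y hx hy ihx ihy =>
    have hxy : x + y + involute (reverse (x + y)) =
        (x + involute (reverse x)) + (y + involute (reverse y)) := by
      rw [map_add, map_add, add_add_add_comm]
    rw [hxy]; exact add_mem ihx ihy
  | smul r x hx ih =>
    have hrx : r • x + involute (reverse (r • x)) = r • (x + involute (reverse x)) := by
      rw [map_smul, map_smul, smul_add]
    rw [hrx]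
    exact Subalgebra.smul_mem _ ih r
end

section
/- Let V be a real vector space with finrank V = 3 and Q a quadratic form on V. Then for every B in the Clifford algebra Cl(Q), the product B·(involute (reverse B)) lies in the center of Cl(Q). -/
open CliffordAlgebra

set_option maxHeartbeats 2000000 in
theorem stmt_13 (V : Type*) [AddCommGroup V] [Module ℝ V]
    (hV : Module.finrank ℝ V = 3) (Q : QuadraticForm ℝ V)
    (B : CliffordAlgebra Q) :
    B * involute (reverse B) ∈ Subalgebra.center ℝ (CliffordAlgebra Q) := by
  classical
  have : FiniteDimensional ℝ V := Module.finite_of_finrank_eq_succ hV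
  obtain ⟨v, hv⟩ := LinearMap.BilinForm.exists_orthogonal_basis
    (QuadraticForm.associated_isSymm ℝ Q)
  let b : Module.Basis (Fin 3) ℝ V := v.reindex (finCongr hV)
  have hb : ∀ i j : Fin 3, i ≠ j → Q.IsOrtho (b i) (b j) := by
    intro i j hij
    rw [← QuadraticMap.associated_isOrtho]
    have : ((finCongr hV).symm i : Fin (Module.finrank ℝ V)) ≠ (finCongr hV).symm j := by
      simpa [Fin.ext_iff] using hij
    simpa [b, Module.Basis.reindex_apply] using hv this
  -- generators
  set x : CliffordAlgebra Q := ι Q (b 0) with hxd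
  set y : CliffordAlgebra Q := ι Q (b 1) with hyd
  set z : CliffordAlgebra Q := ι Q (b 2) with hzd
  set qx : ℝ := Q (b 0) with hqx
  set qy : ℝ := Q (b 1) with hqy
  set qz : ℝ := Q (b 2) with hqz
  have hx2 : x * x = qx • (1 : CliffordAlgebra Q) := by
    rw [hxd, ι_sq_scalar, Algebra.algebraMap_eq_smul_one]
  have hy2 : y * y = qy • (1 : CliffordAlgebra Q) := by
    rw [hyd, ι_sq_scalar, Algebra.algebraMap_eq_smul_one]
  have hz2 : z * z = qz • (1 : CliffordAlgebra Q) := by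
    rw [hzd, ι_sq_scalar, Algebra.algebraMap_eq_smul_one]
  have hyx : y * x = -(x * y) := ι_mul_ι_comm_of_isOrtho ((hb 0 1 (by decide)).symm)
  have hzx : z * x = -(x * z) := ι_mul_ι_comm_of_isOrtho ((hb 0 2 (by decide)).symm)
  have hzy : z * y = -(y * z) := ι_mul_ι_comm_of_isOrtho ((hb 1 2 (by decide)).symm)
  have hyx' : ∀ w, y * (x * w) = -(x * (y * w)) :=
    fun w => ι_mul_ι_mul_of_isOrtho w ((hb 0 1 (by decide)).symm)
  have hzx' : ∀ w, z * (x * w) = -(x * (z * w)) :=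
    fun w => ι_mul_ι_mul_of_isOrtho w ((hb 0 2 (by decide)).symm)
  have hzy' : ∀ w, z * (y * w) = -(y * (z * w)) :=
    fun w => ι_mul_ι_mul_of_isOrtho w ((hb 1 2 (by decide)).symm)
  have hx2' : ∀ w, x * (x * w) = qx • w := by
    intro w; rw [← mul_assoc, hx2, smul_mul_assoc, one_mul]
  have hy2' : ∀ w, y * (y * w) = qy • w := by
    intro w; rw [← mul_assoc, hy2, smul_mul_assoc, one_mul]
  have hz2' : ∀ w, z * (z * w) = qz • w := by
    intro w; rw [← mul_assoc, hz2, smul_mul_assoc, one_mul]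
  -- conjugation values on monomials
  have hc1 : involute (reverse (1 : CliffordAlgebra Q)) = 1 := by simp
  have hcx : involute (reverse x) = -x := by rw [hxd]; simp
  have hcy : involute (reverse y) = -y := by rw [hyd]; simp
  have hcz : involute (reverse z) = -z := by rw [hzd]; simp
  have hcxy : involute (reverse (x * y)) = -(x * y) := by
    rw [reverse.map_mul, map_mul, hcx, hcy, neg_mul_neg, hyx]
  have hcxz : involute (reverse (x * z)) = -(x * z) := by
    rw [reverse.map_mul, map_mul, hcx, hcz, neg_mul_neg, hzx]
  have hcyz : involute (reverse (y * z)) = -(y * z) := by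
    rw [reverse.map_mul, map_mul, hcy, hcz, neg_mul_neg, hzy]
  have hcw : involute (reverse (x * (y * z))) = x * (y * z) := by
    rw [reverse.map_mul, map_mul, hcx, hcyz, neg_mul_neg, mul_assoc, hzx, mul_neg, hyx',
      neg_neg]
  -- centrality criterion
  have hcrit : ∀ w : CliffordAlgebra Q, (∀ u : V, ι Q u * w = w * ι Q u) →
      w ∈ Subalgebra.center ℝ (CliffordAlgebra Q) := by
    intro w hw
    rw [Subalgebra.mem_center_iff]
    intro g
    induction g using CliffordAlgebra.induction with
    | algebraMap r => exact Algebra.commutes r w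
    | ι u => exact hw u
    | mul a c ha hc => rw [mul_assoc, hc, ← mul_assoc, ha, mul_assoc]
    | add a c ha hc => rw [add_mul, mul_add, ha, hc]
  have hgen : ∀ w : CliffordAlgebra Q, x * w = w * x → y * w = w * y → z * w = w * z →
      ∀ u : V, ι Q u * w = w * ι Q u := by
    intro w h0 h1 h2 u
    have hu : ι Q u = (b.repr u 0) • x + (b.repr u 1) • y + (b.repr u 2) • z := by
      conv_lhs => rw [← b.sum_repr u]
      rw [map_sum, Fin.sum_univ_three, map_smul, map_smul, map_smul, ← hxd, ← hyd, ← hzd]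
    rw [hu]
    simp only [add_mul, mul_add, smul_mul_assoc, mul_smul_comm, h0, h1, h2]
  have h1c : (1 : CliffordAlgebra Q) ∈ Subalgebra.center ℝ (CliffordAlgebra Q) :=
    one_mem _
  have hwc : x * (y * z) ∈ Subalgebra.center ℝ (CliffordAlgebra Q) := by
    refine hcrit _ (hgen _ ?_ ?_ ?_)
    · simp only [mul_assoc, hx2', hy2', hz2', hx2, hy2, hz2, hyx', hzx', hzy', hyx, hzx, hzy,
        mul_smul_comm, smul_mul_assoc, smul_smul, mul_neg, neg_mul, neg_neg, neg_smul,
        smul_neg, mul_one, one_mul]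
    · simp only [mul_assoc, hx2', hy2', hz2', hx2, hy2, hz2, hyx', hzx', hzy', hyx, hzx, hzy,
        mul_smul_comm, smul_mul_assoc, smul_smul, mul_neg, neg_mul, neg_neg, neg_smul,
        smul_neg, mul_one, one_mul]
    · simp only [mul_assoc, hx2', hy2', hz2', hx2, hy2, hz2, hyx', hzx', hzy', hyx, hzx, hzy,
        mul_smul_comm, smul_mul_assoc, smul_smul, mul_neg, neg_mul, neg_neg, neg_smul,
        smul_neg, mul_one, one_mul]
  -- the span of the eight monomials
  set M : Set (CliffordAlgebra Q) :=
    {1, x, y, z, x * y, x * z, y * z, x * (y * z)} with hMd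
  set S : Submodule ℝ (CliffordAlgebra Q) := Submodule.span ℝ M with hSd
  have hm1 : (1 : CliffordAlgebra Q) ∈ S := Submodule.subset_span (Set.mem_insert _ _)
  have hmx : x ∈ S := Submodule.subset_span (Set.mem_insert_of_mem _ (Set.mem_insert _ _))
  have hmy : y ∈ S := Submodule.subset_span (Set.mem_insert_of_mem _ (Set.mem_insert_of_mem _ (Set.mem_insert _ _)))
  have hmz : z ∈ S := Submodule.subset_span (Set.mem_insert_of_mem _ (Set.mem_insert_of_mem _ (Set.mem_insert_of_mem _ (Set.mem_insert _ _))))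
  have hmxy : x * y ∈ S := Submodule.subset_span (Set.mem_insert_of_mem _ (Set.mem_insert_of_mem _ (Set.mem_insert_of_mem _ (Set.mem_insert_of_mem _ (Set.mem_insert _ _)))))
  have hmxz : x * z ∈ S := Submodule.subset_span (Set.mem_insert_of_mem _ (Set.mem_insert_of_mem _ (Set.mem_insert_of_mem _ (Set.mem_insert_of_mem _ (Set.mem_insert_of_mem _ (Set.mem_insert _ _))))))
  have hmyz : y * z ∈ S := Submodule.subset_span (Set.mem_insert_of_mem _ (Set.mem_insert_of_mem _ (Set.mem_insert_of_mem _ (Set.mem_insert_of_mem _ (Set.mem_insert_of_mem _ (Set.mem_insert_of_mem _ (Set.mem_insert _ _)))))))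
  have hmw : x * (y * z) ∈ S := Submodule.subset_span (Set.mem_insert_of_mem _ (Set.mem_insert_of_mem _ (Set.mem_insert_of_mem _ (Set.mem_insert_of_mem _ (Set.mem_insert_of_mem _ (Set.mem_insert_of_mem _ (Set.mem_insert_of_mem _ (rfl))))))))
  have hstep : ∀ g : CliffordAlgebra Q, (∀ t ∈ M, g * t ∈ S) → ∀ w ∈ S, g * w ∈ S := by
    intro g hg w hw
    induction hw using Submodule.span_induction with
    | mem t ht => exact hg t ht
    | zero => rw [mul_zero]; exact S.zero_mem
    | add a c _ _ h₁ h₂ => rw [mul_add]; exact S.add_mem h₁ h₂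
    | smul r a _ h₁ => rw [mul_smul_comm]; exact S.smul_mem r h₁
  have hxS : ∀ w ∈ S, x * w ∈ S := by
    refine hstep x ?_
    intro t ht
    simp only [hMd, Set.mem_insert_iff, Set.mem_singleton_iff] at ht
    obtain rfl | rfl | rfl | rfl | rfl | rfl | rfl | rfl := ht <;>
      (try simp only [mul_assoc, hx2', hy2', hz2', hx2, hy2, hz2, hyx', hzx', hzy', hyx, hzx, hzy,
        mul_smul_comm, smul_mul_assoc, smul_smul, mul_neg, neg_mul, neg_neg, neg_smul,
        smul_neg, mul_one, one_mul]) <;>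
      (repeat first
        | exact hm1 | exact hmx | exact hmy | exact hmz | exact hmxy | exact hmxz
        | exact hmyz | exact hmw
        | apply Submodule.zero_mem | apply Submodule.neg_mem | apply Submodule.add_mem
        | apply Submodule.smul_mem)
  have hyS : ∀ w ∈ S, y * w ∈ S := by
    refine hstep y ?_
    intro t ht
    simp only [hMd, Set.mem_insert_iff, Set.mem_singleton_iff] at ht
    obtain rfl | rfl | rfl | rfl | rfl | rfl | rfl | rfl := ht <;>
      (try simp only [mul_assoc, hx2', hy2', hz2', hx2, hy2, hz2, hyx', hzx', hzy', hyx, hzx, hzy,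
        mul_smul_comm, smul_mul_assoc, smul_smul, mul_neg, neg_mul, neg_neg, neg_smul,
        smul_neg, mul_one, one_mul]) <;>
      (repeat first
        | exact hm1 | exact hmx | exact hmy | exact hmz | exact hmxy | exact hmxz
        | exact hmyz | exact hmw
        | apply Submodule.zero_mem | apply Submodule.neg_mem | apply Submodule.add_mem
        | apply Submodule.smul_mem)
  have hzS : ∀ w ∈ S, z * w ∈ S := by
    refine hstep z ?_
    intro t ht
    simp only [hMd, Set.mem_insert_iff, Set.mem_singleton_iff] at ht
    obtain rfl | rfl | rfl | rfl | rfl | rfl | rfl | rfl := ht <;>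
      (try simp only [mul_assoc, hx2', hy2', hz2', hx2, hy2, hz2, hyx', hzx', hzy', hyx, hzx, hzy,
        mul_smul_comm, smul_mul_assoc, smul_smul, mul_neg, neg_mul, neg_neg, neg_smul,
        smul_neg, mul_one, one_mul]) <;>
      (repeat first
        | exact hm1 | exact hmx | exact hmy | exact hmz | exact hmxy | exact hmxz
        | exact hmyz | exact hmw
        | apply Submodule.zero_mem | apply Submodule.neg_mem | apply Submodule.add_mem
        | apply Submodule.smul_mem)
  have hmulS : ∀ a ∈ S, ∀ w ∈ S, a * w ∈ S := by
    intro a ha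
    induction ha using Submodule.span_induction with
    | mem t ht =>
      simp only [hMd, Set.mem_insert_iff, Set.mem_singleton_iff] at ht
      obtain rfl | rfl | rfl | rfl | rfl | rfl | rfl | rfl := ht
      · intro w hw; rw [one_mul]; exact hw
      · exact hxS
      · exact hyS
      · exact hzS
      · intro w hw; rw [mul_assoc]; exact hxS _ (hyS _ hw)
      · intro w hw; rw [mul_assoc]; exact hxS _ (hzS _ hw)
      · intro w hw; rw [mul_assoc]; exact hyS _ (hzS _ hw)
      · intro w hw; rw [mul_assoc, mul_assoc]; exact hxS _ (hyS _ (hzS _ hw))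
    | zero => intro w hw; rw [zero_mul]; exact S.zero_mem
    | add a c _ _ h₁ h₂ => intro w hw; rw [add_mul]; exact S.add_mem (h₁ w hw) (h₂ w hw)
    | smul r a _ h₁ => intro w hw; rw [smul_mul_assoc]; exact S.smul_mem r (h₁ w hw)
  have hall : ∀ g : CliffordAlgebra Q, g ∈ S := by
    intro g
    induction g using CliffordAlgebra.induction with
    | algebraMap r => rw [Algebra.algebraMap_eq_smul_one]; exact S.smul_mem r hm1
    | ι u =>
      have hu : ι Q u = (b.repr u 0) • x + (b.repr u 1) • y + (b.repr u 2) • z := by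
        conv_lhs => rw [← b.sum_repr u]
        rw [map_sum, Fin.sum_univ_three, map_smul, map_smul, map_smul, ← hxd, ← hyd, ← hzd]
      rw [hu]
      exact S.add_mem (S.add_mem (S.smul_mem _ hmx) (S.smul_mem _ hmy)) (S.smul_mem _ hmz)
    | mul a c ha hc => exact hmulS a ha c hc
    | add a c ha hc => exact S.add_mem ha hc
  -- the key bilinear fact
  have key : ∀ a ∈ S, ∀ c ∈ S,
      a * involute (reverse c) + c * involute (reverse a) ∈
        Subalgebra.center ℝ (CliffordAlgebra Q) := by
    intro a ha c hc
    induction ha, hc using Submodule.span_induction₂ with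
    | mem_mem s t hs ht =>
      simp only [hMd, Set.mem_insert_iff, Set.mem_singleton_iff] at hs ht
      obtain rfl | rfl | rfl | rfl | rfl | rfl | rfl | rfl := hs <;>
        obtain rfl | rfl | rfl | rfl | rfl | rfl | rfl | rfl := ht <;>
        (try simp only [hc1, hcx, hcy, hcz, hcxy, hcxz, hcyz, hcw,
          mul_assoc, hx2', hy2', hz2', hx2, hy2, hz2, hyx', hzx', hzy', hyx, hzx, hzy,
          mul_smul_comm, smul_mul_assoc, smul_smul, mul_neg, neg_mul, neg_neg, neg_smul,
          smul_neg, mul_one, one_mul, add_neg_cancel, neg_add_cancel]) <;>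
        (repeat first
          | exact h1c | exact hwc
          | apply zero_mem | apply neg_mem | apply add_mem | apply Subalgebra.smul_mem)
    | zero_left c hc =>
      simp only [map_zero, zero_mul, mul_zero, add_zero, zero_add]
      exact zero_mem _
    | zero_right a ha =>
      simp only [map_zero, zero_mul, mul_zero, add_zero, zero_add]
      exact zero_mem _
    | add_left a a' c _ _ _ h₁ h₂ =>
      have : (a + a') * involute (reverse c) + c * involute (reverse (a + a')) =
          (a * involute (reverse c) + c * involute (reverse a)) +
            (a' * involute (reverse c) + c * involute (reverse a')) := by
        rw [map_add, map_add]; noncomm_ring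
      rw [this]; exact add_mem h₁ h₂
    | add_right a c c' _ _ _ h₁ h₂ =>
      have : a * involute (reverse (c + c')) + (c + c') * involute (reverse a) =
          (a * involute (reverse c) + c * involute (reverse a)) +
            (a * involute (reverse c') + c' * involute (reverse a)) := by
        rw [map_add, map_add]; noncomm_ring
      rw [this]; exact add_mem h₁ h₂
    | smul_left r a c _ _ h₁ =>
      have : (r • a) * involute (reverse c) + c * involute (reverse (r • a)) =
          r • (a * involute (reverse c) + c * involute (reverse a)) := by
        rw [map_smul, map_smul, smul_mul_assoc, mul_smul_comm, smul_add]
      rw [this]; exact Subalgebra.smul_mem _ h₁ r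
    | smul_right r a c _ _ h₁ =>
      have : a * involute (reverse (r • c)) + (r • c) * involute (reverse a) =
          r • (a * involute (reverse c) + c * involute (reverse a)) := by
        rw [map_smul, map_smul, smul_mul_assoc, mul_smul_comm, smul_add]
      rw [this]; exact Subalgebra.smul_mem _ h₁ r
  have hBB := key B (hall B) B (hall B)
  have hhalf : ((1 : ℝ) / 2) •
      (B * involute (reverse B) + B * involute (reverse B)) = B * involute (reverse B) := by
    rw [← two_smul ℝ, smul_smul]; norm_num
  exact hhalf ▸ Subalgebra.smul_mem _ hBB ((1 : ℝ) / 2)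
end

section
/- Let V be a real vector space with finrank V = 3 and Q a quadratic form on V. Then for every D in the Clifford algebra Cl(Q), the product D·(involute D)·(reverse D)·(involute (reverse D)) lies in the range of the structure map algebraMap ℝ → Cl(Q). -/
open CliffordAlgebra

theorem aux_stmt14 (V : Type*) [AddCommGroup V] [Module ℝ V]
    (Q : QuadraticForm ℝ V) (v : Module.Basis (Fin 3) ℝ V)
    (ho : ∀ i j : Fin 3, i ≠ j → Q.IsOrtho (v i) (v j))
    (D : CliffordAlgebra Q) :
    D * involute D * reverse D * involute (reverse D) ∈
      Set.range (algebraMap ℝ (CliffordAlgebra Q)) := by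
  set e : Fin 3 → CliffordAlgebra Q := fun i => ι Q (v i) with he
  -- anticommutation, pair form
  have p10 : e 1 * e 0 = -(e 0 * e 1) := ι_mul_ι_comm_of_isOrtho (ho 1 0 (by decide))
  have p20 : e 2 * e 0 = -(e 0 * e 2) := ι_mul_ι_comm_of_isOrtho (ho 2 0 (by decide))
  have p21 : e 2 * e 1 = -(e 1 * e 2) := ι_mul_ι_comm_of_isOrtho (ho 2 1 (by decide))
  -- anticommutation, nested form
  have sw10 : ∀ x, e 1 * (e 0 * x) = -(e 0 * (e 1 * x)) :=
    fun x => ι_mul_ι_mul_of_isOrtho x (ho 1 0 (by decide))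
  have sw20 : ∀ x, e 2 * (e 0 * x) = -(e 0 * (e 2 * x)) :=
    fun x => ι_mul_ι_mul_of_isOrtho x (ho 2 0 (by decide))
  have sw21 : ∀ x, e 2 * (e 1 * x) = -(e 1 * (e 2 * x)) :=
    fun x => ι_mul_ι_mul_of_isOrtho x (ho 2 1 (by decide))
  -- squares
  have sqp : ∀ i, e i * e i = Q (v i) • 1 := fun i => by
    rw [he]; rw [ι_sq_scalar, Algebra.algebraMap_eq_smul_one]
  have sqn : ∀ i x, e i * (e i * x) = Q (v i) • x := fun i x => by
    rw [← mul_assoc, he, ι_sq_scalar, ← Algebra.smul_def]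

  set ω : CliffordAlgebra Q := e 0 * (e 1 * e 2) with hω
  set S : Submodule ℝ (CliffordAlgebra Q) := Submodule.span ℝ
    ({1, e 0, e 1, e 2, e 0 * e 1, e 0 * e 2, e 1 * e 2, e 0 * (e 1 * e 2)} :
      Set (CliffordAlgebra Q)) with hS
  have m1 : (1 : CliffordAlgebra Q) ∈ S := Submodule.subset_span (Or.inl rfl)
  have me0 : e 0 ∈ S := Submodule.subset_span (Or.inr (Or.inl rfl))
  have me1 : e 1 ∈ S := Submodule.subset_span (Or.inr (Or.inr (Or.inl rfl)))
  have me2 : e 2 ∈ S := Submodule.subset_span (Or.inr (Or.inr (Or.inr (Or.inl rfl))))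
  have me01 : e 0 * e 1 ∈ S := Submodule.subset_span (Or.inr (Or.inr (Or.inr (Or.inr (Or.inl rfl)))))
  have me02 : e 0 * e 2 ∈ S := Submodule.subset_span (Or.inr (Or.inr (Or.inr (Or.inr (Or.inr (Or.inl rfl))))))
  have me12 : e 1 * e 2 ∈ S := Submodule.subset_span (Or.inr (Or.inr (Or.inr (Or.inr (Or.inr (Or.inr (Or.inl rfl)))))))
  have mω : ω ∈ S := Submodule.subset_span (Or.inr (Or.inr (Or.inr (Or.inr (Or.inr (Or.inr (Or.inr rfl)))))))
  have key : ∀ x ∈ S, e 0 * x ∈ S ∧ e 1 * x ∈ S ∧ e 2 * x ∈ S := by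
    intro x hx
    induction hx using Submodule.span_induction with
    | mem y hy =>
      simp only [Set.mem_insert_iff, Set.mem_singleton_iff] at hy
      rcases hy with rfl | rfl | rfl | rfl | rfl | rfl | rfl | rfl <;>
        refine ⟨?_, ?_, ?_⟩ <;>
        · try simp only [mul_assoc, sw10, sw20, sw21, p10, p20, p21, sqn, sqp, mul_neg, neg_mul,
            neg_neg, mul_smul_comm, smul_mul_assoc, mul_one, one_mul, smul_neg, smul_smul]
          solve_by_elim [Submodule.smul_mem, Submodule.neg_mem, m1, me0, me1, me2, me01,
            me02, me12, mω]
    | zero => simp [S.zero_mem]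
    | add a b _ _ iha ihb =>
      exact ⟨by rw [mul_add]; exact S.add_mem iha.1 ihb.1,
        by rw [mul_add]; exact S.add_mem iha.2.1 ihb.2.1,
        by rw [mul_add]; exact S.add_mem iha.2.2 ihb.2.2⟩
    | smul r a _ iha =>
      exact ⟨by rw [mul_smul_comm]; exact S.smul_mem _ iha.1,
        by rw [mul_smul_comm]; exact S.smul_mem _ iha.2.1,
        by rw [mul_smul_comm]; exact S.smul_mem _ iha.2.2⟩
  have hιdec : ∀ w : V, ι Q w =
      v.repr w 0 • e 0 + (v.repr w 1 • e 1 + v.repr w 2 • e 2) := by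
    intro w
    conv_lhs => rw [← v.sum_repr w]
    rw [map_sum, Fin.sum_univ_three]; simp only [map_smul, he, add_assoc]
  have hιmul : ∀ (w : V), ∀ x ∈ S, ι Q w * x ∈ S := by
    intro w x hx
    rw [hιdec w, add_mul, add_mul, smul_mul_assoc, smul_mul_assoc, smul_mul_assoc]
    exact S.add_mem (S.smul_mem _ (key x hx).1)
      (S.add_mem (S.smul_mem _ (key x hx).2.1) (S.smul_mem _ (key x hx).2.2))
  have hall : ∀ x : CliffordAlgebra Q, x ∈ S ∧ ∀ y ∈ S, x * y ∈ S := by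
    intro x
    induction x using CliffordAlgebra.induction with
    | algebraMap r =>
      refine ⟨by rw [Algebra.algebraMap_eq_smul_one]; exact S.smul_mem _ m1, fun y hy => ?_⟩
      rw [← Algebra.smul_def]; exact S.smul_mem _ hy
    | ι w =>
      refine ⟨?_, hιmul w⟩
      rw [hιdec w]
      exact S.add_mem (S.smul_mem _ me0) (S.add_mem (S.smul_mem _ me1) (S.smul_mem _ me2))
    | mul a b ha hb =>
      exact ⟨ha.2 b hb.1, fun y hy => by rw [mul_assoc]; exact ha.2 _ (hb.2 y hy)⟩
    | add a b ha hb =>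
      exact ⟨S.add_mem ha.1 hb.1, fun y hy => by
        rw [add_mul]; exact S.add_mem (ha.2 y hy) (hb.2 y hy)⟩

  -- centrality of ω
  have ce0 : e 0 * ω = ω * e 0 := by
    simp only [hω, mul_assoc, sw10, sw20, sw21, p10, p20, p21, sqn, sqp, mul_neg, neg_mul,
      neg_neg, mul_smul_comm, smul_mul_assoc, mul_one, one_mul, smul_neg, smul_smul]
  have ce1 : e 1 * ω = ω * e 1 := by
    simp only [hω, mul_assoc, sw10, sw20, sw21, p10, p20, p21, sqn, sqp, mul_neg, neg_mul,
      neg_neg, mul_smul_comm, smul_mul_assoc, mul_one, one_mul, smul_neg, smul_smul]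
  have ce2 : e 2 * ω = ω * e 2 := by
    simp only [hω, mul_assoc, sw10, sw20, sw21, p10, p20, p21, sqn, sqp, mul_neg, neg_mul,
      neg_neg, mul_smul_comm, smul_mul_assoc, mul_one, one_mul, smul_neg, smul_smul]
  have hcen : ∀ x : CliffordAlgebra Q, ω * x = x * ω := by
    intro x
    induction x using CliffordAlgebra.induction with
    | algebraMap r => exact (Algebra.commutes r ω).symm
    | ι w =>
      rw [hιdec w]
      simp only [mul_add, add_mul, mul_smul_comm, smul_mul_assoc, ce0, ce1, ce2]
    | mul a b ha hb => rw [← mul_assoc, ha, mul_assoc, hb, ← mul_assoc]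
    | add a b ha hb => rw [mul_add, add_mul, ha, hb]
  -- reverse and involute on generators
  have hrev : ∀ i, reverse (Q := Q) (e i) = e i := fun i => reverse_ι (v i)
  have hinv : ∀ i, involute (e i) = -(e i) := fun i => involute_ι (v i)
  have hbar1 : involute (reverse (1 : CliffordAlgebra Q)) = 1 := by simp
  have hbare : ∀ i, involute (reverse (e i)) = -(e i) := fun i => by
    rw [hrev, hinv]
  have hbar01 : involute (reverse (e 0 * e 1)) = -(e 0 * e 1) := by
    rw [reverse.map_mul, hrev, hrev, map_mul, hinv, hinv, neg_mul, mul_neg, neg_neg, p10]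
  have hbar02 : involute (reverse (e 0 * e 2)) = -(e 0 * e 2) := by
    rw [reverse.map_mul, hrev, hrev, map_mul, hinv, hinv, neg_mul, mul_neg, neg_neg, p20]
  have hbar12 : involute (reverse (e 1 * e 2)) = -(e 1 * e 2) := by
    rw [reverse.map_mul, hrev, hrev, map_mul, hinv, hinv, neg_mul, mul_neg, neg_neg, p21]
  have hbarω : involute (reverse ω) = ω := by
    rw [hω, reverse.map_mul, reverse.map_mul, hrev, hrev, hrev]
    rw [map_mul, map_mul, hinv, hinv, hinv]
    simp only [mul_assoc, sw10, sw20, sw21, p10, p20, p21, sqn, sqp, mul_neg, neg_mul,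
      neg_neg, mul_smul_comm, smul_mul_assoc, mul_one, one_mul, smul_neg, smul_smul]
  have hinvω : involute ω = -ω := by
    rw [hω, map_mul, map_mul, hinv, hinv, hinv]
    simp only [mul_neg, neg_mul, neg_neg]
  -- every bar-invariant element is in span {1, ω}
  have hP1 : (1 : CliffordAlgebra Q) ∈ Submodule.span ℝ ({1, ω} : Set (CliffordAlgebra Q)) :=
    Submodule.subset_span (Or.inl rfl)
  have hPω : ω ∈ Submodule.span ℝ ({1, ω} : Set (CliffordAlgebra Q)) :=
    Submodule.subset_span (Or.inr rfl)
  have hLP : ∀ x : CliffordAlgebra Q,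
      x + involute (reverse x) ∈ Submodule.span ℝ ({1, ω} : Set (CliffordAlgebra Q)) := by
    intro x
    have hx := (hall x).1
    induction hx using Submodule.span_induction with
    | mem y hy =>
      simp only [Set.mem_insert_iff, Set.mem_singleton_iff] at hy
      rcases hy with rfl | rfl | rfl | rfl | rfl | rfl | rfl | rfl
      · rw [hbar1]; exact add_mem hP1 hP1
      · rw [hbare 0, add_neg_cancel]; exact zero_mem _
      · rw [hbare 1, add_neg_cancel]; exact zero_mem _
      · rw [hbare 2, add_neg_cancel]; exact zero_mem _
      · rw [hbar01, add_neg_cancel]; exact zero_mem _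
      · rw [hbar02, add_neg_cancel]; exact zero_mem _
      · rw [hbar12, add_neg_cancel]; exact zero_mem _
      · rw [← hω, hbarω]; exact add_mem hPω hPω
    | zero => simp
    | add x y _ _ ihx ihy =>
      rw [map_add, map_add, add_add_add_comm]
      exact add_mem ihx ihy
    | smul r x _ ihx =>
      rw [map_smul, map_smul, ← smul_add]
      exact Submodule.smul_mem _ _ ihx
  -- z := D * bar D is bar-invariant
  have hbarz : involute (reverse (D * involute (reverse D))) = D * involute (reverse D) := by
    simp only [reverse.map_mul, reverse_involute, reverse_reverse, map_mul, involute_involute]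

  have hzP : D * involute (reverse D) ∈ Submodule.span ℝ ({1, ω} : Set (CliffordAlgebra Q)) := by
    have h2 := hLP (D * involute (reverse D))
    rw [hbarz] at h2
    have h3 : D * involute (reverse D) =
        (2⁻¹ : ℝ) • (D * involute (reverse D) + D * involute (reverse D)) := by
      rw [← two_smul ℝ, smul_smul]; norm_num
    rw [h3]
    exact Submodule.smul_mem _ _ h2
  obtain ⟨a, b, hab⟩ := Submodule.mem_span_pair.mp hzP
  have hω2 : ω * ω = (-(Q (v 0) * (Q (v 1) * Q (v 2)))) • (1 : CliffordAlgebra Q) := by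
    rw [hω]
    simp only [mul_assoc, sw10, sw20, sw21, p10, p20, p21, sqn, sqp, mul_neg, neg_mul,
      neg_neg, mul_smul_comm, smul_mul_assoc, mul_one, one_mul, smul_neg, smul_smul, neg_smul]
    module
  have step1 : D * involute (a • (1 : CliffordAlgebra Q) + b • ω) * involute (reverse D)
      = D * involute D * reverse D * involute (reverse D) := by
    rw [hab, map_mul, involute_involute, ← mul_assoc D]
  have expand : D * (a • (1 : CliffordAlgebra Q) + b • (-ω)) * involute (reverse D)
      = a • (D * involute (reverse D)) - b • (D * (ω * involute (reverse D))) := by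
    rw [mul_add, add_mul, mul_smul_comm, mul_one, smul_mul_assoc, smul_neg, mul_neg, neg_mul,
      mul_smul_comm, smul_mul_assoc, mul_assoc, ← sub_eq_add_neg]
  have hfinal : D * involute (a • (1 : CliffordAlgebra Q) + b • ω) * involute (reverse D)
      = (a * a + b * b * (Q (v 0) * (Q (v 1) * Q (v 2)))) • (1 : CliffordAlgebra Q) := by
    rw [map_add, map_smul, map_smul, map_one, hinvω, expand, hcen (involute (reverse D)),
      ← mul_assoc D, ← hab, add_mul, smul_mul_assoc, smul_mul_assoc, one_mul, hω2]
    module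
  refine ⟨a * a + b * b * (Q (v 0) * (Q (v 1) * Q (v 2))), ?_⟩
  rw [← step1, hfinal, Algebra.algebraMap_eq_smul_one]




theorem stmt_14 (V : Type*) [AddCommGroup V] [Module ℝ V]
    (hV : Module.finrank ℝ V = 3) (Q : QuadraticForm ℝ V)
    (D : CliffordAlgebra Q) :
    D * involute D * reverse D * involute (reverse D) ∈
      Set.range (algebraMap ℝ (CliffordAlgebra Q)) := by
  have hfd : FiniteDimensional ℝ V := Module.finite_of_finrank_pos (by rw [hV]; norm_num)
  letI : Invertible (2 : ℝ) := invertibleOfNonzero two_ne_zero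
  obtain ⟨v, hv⟩ := LinearMap.BilinForm.exists_orthogonal_basis
    ((QuadraticForm.associated_isSymm (S := ℝ) Q))
  refine aux_stmt14 V Q (v.reindex (finCongr hV)) (fun i j hij => ?_) D
  simp only [Module.Basis.reindex_apply]
  exact QuadraticMap.associated_isOrtho.mp
    (hv (fun h => hij (by simpa using congrArg (finCongr hV) h)))
end

section
/- Let V be a real vector space with finrank V = 3, Q a quadratic form on V, and D an element of the Clifford algebra Cl(Q). If D·(involute D)·(reverse D)·(involute (reverse D)) = algebraMap q for some real number q ≠ 0, then D is a unit with two-sided inverse q⁻¹ • ((involute D)·(reverse D)·(involute (reverse D))); that is, D·(q⁻¹ • ((involute D)·(reverse D)·(involute (reverse D)))) = 1 and (q⁻¹ • ((involute D)·(reverse D)·(involute (reverse D))))·D = 1. -/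
open CliffordAlgebra

lemma aux_exterior_finite (V : Type*) [AddCommGroup V] [Module ℝ V]
    [FiniteDimensional ℝ V] : Module.Finite ℝ (ExteriorAlgebra ℝ V) := by
  set n := Module.finrank ℝ V with hn
  have hrangeFG : (LinearMap.range (ExteriorAlgebra.ι ℝ (M := V))).FG := by
    rw [LinearMap.range_eq_map]
    exact (Module.finite_def.mp inferInstance).map _
  have hpow : ∀ i : ℕ, n < i →
      (LinearMap.range (ExteriorAlgebra.ι ℝ (M := V))) ^ i = ⊥ := by
    intro i hi
    rw [show (LinearMap.range (ExteriorAlgebra.ι ℝ (M := V))) ^ i = ⋀[ℝ]^i V from rfl,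
      ← ExteriorAlgebra.ιMulti_span_fixedDegree, Submodule.span_eq_bot]
    rintro x ⟨v, rfl⟩
    refine AlternatingMap.map_linearDependent _ v fun hli => ?_
    have := hli.fintype_card_le_finrank
    simp only [Fintype.card_fin] at this
    omega
  have htop : (⊤ : Submodule ℝ (ExteriorAlgebra ℝ V)) =
      ⨆ i ∈ Finset.range (n + 1),
        (LinearMap.range (ExteriorAlgebra.ι ℝ (M := V))) ^ i := by
    refine le_antisymm ?_ le_top
    rw [← CliffordAlgebra.iSup_ι_range_eq_top (Q := (0 : QuadraticForm ℝ V))]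
    refine iSup_le fun i => ?_
    by_cases h : i ≤ n
    · exact le_biSup _ (Finset.mem_range.mpr (by omega))
    · rw [show LinearMap.range (CliffordAlgebra.ι (0 : QuadraticForm ℝ V)) ^ i
          = (LinearMap.range (ExteriorAlgebra.ι ℝ (M := V))) ^ i from rfl,
        hpow i (by omega)]
      exact bot_le
  refine Module.finite_def.mpr ?_
  rw [htop]
  exact Submodule.fg_biSup _ _ fun i _ => hrangeFG.pow i

lemma aux_clifford_finite (V : Type*) [AddCommGroup V] [Module ℝ V]
    [FiniteDimensional ℝ V] (Q : QuadraticForm ℝ V) :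
    Module.Finite ℝ (CliffordAlgebra Q) := by
  letI : Invertible (2 : ℝ) := invertibleOfNonzero two_ne_zero
  haveI := aux_exterior_finite V
  exact Module.Finite.equiv (CliffordAlgebra.equivExterior Q).symm

lemma aux_mul_comm_one {A : Type*} [Ring A] [Algebra ℝ A] [FiniteDimensional ℝ A]
    {a b : A} (h : a * b = 1) : b * a = 1 := by
  have hf : LinearMap.mulLeft ℝ a * LinearMap.mulLeft ℝ b = 1 := by
    rw [Module.End.mul_eq_comp, ← LinearMap.mulLeft_mul, h, LinearMap.mulLeft_one,
      Module.End.one_eq_id]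
  have hg := mul_eq_one_comm.mp hf
  have := LinearMap.congr_fun hg 1
  simpa using this

theorem stmt_15 (V : Type*) [AddCommGroup V] [Module ℝ V]
    (hV : Module.finrank ℝ V = 3) (Q : QuadraticForm ℝ V)
    (D : CliffordAlgebra Q) (q : ℝ) (hq : q ≠ 0)
    (hdet : D * involute D * reverse D * involute (reverse D) =
      algebraMap ℝ (CliffordAlgebra Q) q) :
    D * (q⁻¹ • (involute D * reverse D * involute (reverse D))) = 1 ∧
      (q⁻¹ • (involute D * reverse D * involute (reverse D))) * D = 1 := by
  haveI : FiniteDimensional ℝ V := Module.finite_of_finrank_pos (by rw [hV]; norm_num)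
  haveI : FiniteDimensional ℝ (CliffordAlgebra Q) := aux_clifford_finite V Q
  have h1 : D * (q⁻¹ • (involute D * reverse D * involute (reverse D))) = 1 := by
    rw [mul_smul_comm, ← mul_assoc, ← mul_assoc, hdet, Algebra.algebraMap_eq_smul_one,
      smul_smul, inv_mul_cancel₀ hq, one_smul]
  exact ⟨h1, aux_mul_comm_one h1⟩
end

section
/- Let V be a real vector space with finrank V = 3, Q a quadratic form on V, and A, B, C, X elements of the Clifford algebra Cl(Q). If A·X − X·B = C, then D·X = A·C − C·B̄, where B̄ := involute (reverse B) and D := A² − A·(B + B̄) + B·B̄. -/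
set_option maxHeartbeats 1000000

open CliffordAlgebra

section Aux

variable {V : Type*} [AddCommGroup V] [Module ℝ V] {Q : QuadraticForm ℝ V}

/-- In dimension 3, `y + star y` is central. -/
theorem aux_central (hV : Module.finrank ℝ V = 3)
    (y x : CliffordAlgebra Q) :
    (y + star y) * x = x * (y + star y) := by
  haveI : FiniteDimensional ℝ V := FiniteDimensional.of_finrank_eq_succ hV
  obtain ⟨v, hv⟩ := LinearMap.BilinForm.exists_orthogonal_basis
    (QuadraticForm.associated_isSymm ℝ Q)
  set b : Module.Basis (Fin 3) ℝ V := v.reindex (finCongr hV) with hb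
  set e : Fin 3 → CliffordAlgebra Q := fun i => ι Q (b i) with he
  have horth : ∀ i j : Fin 3, i ≠ j → Q.IsOrtho (b i) (b j) := by
    intro i j hij
    have hne : (finCongr hV).symm i ≠ (finCongr hV).symm j := fun hij' =>
      hij (by simpa using congrArg (finCongr hV) hij')
    have h2 := hv hne
    rw [hb]
    simp only [Module.Basis.reindex_apply]
    exact QuadraticMap.associated_isOrtho.mp h2
  -- basic relations
  have h10 : e 1 * e 0 = -(e 0 * e 1) := ι_mul_ι_comm_of_isOrtho ((horth 0 1 (by decide)).symm)
  have h20 : e 2 * e 0 = -(e 0 * e 2) := ι_mul_ι_comm_of_isOrtho ((horth 0 2 (by decide)).symm)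
  have h21 : e 2 * e 1 = -(e 1 * e 2) := ι_mul_ι_comm_of_isOrtho ((horth 1 2 (by decide)).symm)
  have q0 : e 0 * e 0 = Q (b 0) • (1 : CliffordAlgebra Q) := by
    rw [ι_sq_scalar, Algebra.algebraMap_eq_smul_one]
  have q1 : e 1 * e 1 = Q (b 1) • (1 : CliffordAlgebra Q) := by
    rw [ι_sq_scalar, Algebra.algebraMap_eq_smul_one]
  have q2 : e 2 * e 2 = Q (b 2) • (1 : CliffordAlgebra Q) := by
    rw [ι_sq_scalar, Algebra.algebraMap_eq_smul_one]
  have w10 : ∀ z, e 1 * (e 0 * z) = -(e 0 * (e 1 * z)) := by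
    intro z; rw [← mul_assoc, h10, ← mul_assoc, neg_mul]
  have w20 : ∀ z, e 2 * (e 0 * z) = -(e 0 * (e 2 * z)) := by
    intro z; rw [← mul_assoc, h20, ← mul_assoc, neg_mul]
  have w21 : ∀ z, e 2 * (e 1 * z) = -(e 1 * (e 2 * z)) := by
    intro z; rw [← mul_assoc, h21, ← mul_assoc, neg_mul]
  have v0 : ∀ z, e 0 * (e 0 * z) = Q (b 0) • z := by
    intro z; rw [← mul_assoc, q0, smul_mul_assoc, one_mul]
  have v1 : ∀ z, e 1 * (e 1 * z) = Q (b 1) • z := by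
    intro z; rw [← mul_assoc, q1, smul_mul_assoc, one_mul]
  have v2 : ∀ z, e 2 * (e 2 * z) = Q (b 2) • z := by
    intro z; rw [← mul_assoc, q2, smul_mul_assoc, one_mul]
  have sti : ∀ i, star (e i) = -(e i) := fun i => by
    simp only [he]; exact star_ι _
  set S : Submodule ℝ (CliffordAlgebra Q) := Submodule.span ℝ
    ({1, e 0, e 1, e 2, e 0 * e 1, e 0 * e 2, e 1 * e 2, e 0 * (e 1 * e 2)} :
      Set (CliffordAlgebra Q)) with hS
  have hm1 : (1 : CliffordAlgebra Q) ∈ S := Submodule.subset_span (by simp)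
  have hme : ∀ i, e i ∈ S := by
    intro i; fin_cases i <;> exact Submodule.subset_span (by simp)
  have hm01 : e 0 * e 1 ∈ S := Submodule.subset_span (by simp)
  have hm02 : e 0 * e 2 ∈ S := Submodule.subset_span (by simp)
  have hm12 : e 1 * e 2 ∈ S := Submodule.subset_span (by simp)
  have hm012 : e 0 * (e 1 * e 2) ∈ S := Submodule.subset_span (by simp)
  -- S is closed under left multiplication by the generators
  have hgen : ∀ i : Fin 3, ∀ s ∈ S, e i * s ∈ S := by
    intro i s hs
    induction hs using Submodule.span_induction with
    | mem z hz =>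
      have e2eta : (⟨2, by omega⟩ : Fin 3) = 2 := rfl
      fin_cases i <;>
        simp only [Fin.zero_eta, Fin.mk_one, e2eta, Fin.isValue] <;>
        simp only [Set.mem_insert_iff, Set.mem_singleton_iff] at hz <;>
        rcases hz with rfl | rfl | rfl | rfl | rfl | rfl | rfl | rfl <;>
        (try simp only [mul_one, one_mul, h10, h20, h21, q0, q1, q2, w10, w20, w21,
          v0, v1, v2, mul_neg, neg_mul, neg_neg, mul_smul_comm, smul_mul_assoc,
          smul_neg, smul_smul, mul_assoc]) <;>
        apply_rules [Submodule.neg_mem, Submodule.smul_mem, hm1, hm01, hm02, hm12,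
          hm012, hme]
    | zero => simpa using S.zero_mem
    | add x y hx hy ihx ihy => rw [mul_add]; exact S.add_mem ihx ihy
    | smul a x hx ihx => rw [mul_smul_comm]; exact S.smul_mem _ ihx
  -- S is closed under multiplication
  have hmul : ∀ a ∈ S, ∀ c ∈ S, a * c ∈ S := by
    intro a ha
    induction ha using Submodule.span_induction with
    | mem z hz =>
      intro c hc
      simp only [Set.mem_insert_iff, Set.mem_singleton_iff] at hz
      rcases hz with rfl | rfl | rfl | rfl | rfl | rfl | rfl | rfl
      · simpa using hc
      · exact hgen 0 c hc
      · exact hgen 1 c hc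
      · exact hgen 2 c hc
      · rw [mul_assoc]; exact hgen 0 _ (hgen 1 c hc)
      · rw [mul_assoc]; exact hgen 0 _ (hgen 2 c hc)
      · rw [mul_assoc]; exact hgen 1 _ (hgen 2 c hc)
      · rw [mul_assoc, mul_assoc]; exact hgen 0 _ (hgen 1 _ (hgen 2 c hc))
    | zero => intro c hc; simpa using S.zero_mem
    | add x y hx hy ihx ihy => intro c hc; rw [add_mul]; exact S.add_mem (ihx c hc) (ihy c hc)
    | smul a x hx ihx => intro c hc; rw [smul_mul_assoc]; exact S.smul_mem _ (ihx c hc)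
  -- every element is in S
  have memS : ∀ z : CliffordAlgebra Q, z ∈ S := by
    intro z
    induction z using CliffordAlgebra.induction with
    | algebraMap r => rw [Algebra.algebraMap_eq_smul_one]; exact S.smul_mem _ hm1
    | ι w =>
      have : ι Q w = ∑ i, b.repr w i • e i := by
        conv_lhs => rw [← Module.Basis.sum_repr b w]
        simp only [he, map_sum, map_smul]
      rw [this]
      exact Submodule.sum_mem _ fun i _ => S.smul_mem _ (hme i)
    | mul a c ha hc => exact hmul a ha c hc
    | add a c ha hc => exact S.add_mem ha hc
  -- `z + star z` commutes with each generator
  have hkey : ∀ z : CliffordAlgebra Q, ∀ i : Fin 3,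
      (z + star z) * e i = e i * (z + star z) := by
    intro z
    have hz := memS z
    induction hz using Submodule.span_induction with
    | mem m hm =>
      intro i
      simp only [Set.mem_insert_iff, Set.mem_singleton_iff] at hm
      have hstar1 : star (1 : CliffordAlgebra Q) = 1 := star_one _
      have e2eta : (⟨2, by omega⟩ : Fin 3) = 2 := rfl
      rcases hm with rfl | rfl | rfl | rfl | rfl | rfl | rfl | rfl <;>
        fin_cases i <;>
        simp only [Fin.zero_eta, Fin.mk_one, e2eta, Fin.isValue] <;>
        (try simp only [star_one, star_mul, sti, mul_neg, neg_mul, neg_neg]) <;>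
        (try simp only [add_mul, mul_add, mul_one, one_mul, h10, h20, h21, q0, q1, q2,
          w10, w20, w21, v0, v1, v2, mul_neg, neg_mul, neg_neg, mul_smul_comm,
          smul_mul_assoc, smul_neg, smul_smul, mul_assoc]) <;>
        try abel
    | zero => intro i; simp
    | add x y hx hy ihx ihy =>
      intro i
      have : x + y + star (x + y) = (x + star x) + (y + star y) := by
        rw [star_add]; abel
      rw [this, add_mul, mul_add, ihx i, ihy i]
    | smul a x hx ihx =>
      intro i
      have : a • x + star (a • x) = a • (x + star x) := by
        rw [CliffordAlgebra.star_smul, smul_add]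
      rw [this, smul_mul_assoc, mul_smul_comm, ihx i]
  -- commuting with generators implies commuting with everything
  have hι : ∀ w : V, (y + star y) * ι Q w = ι Q w * (y + star y) := by
    intro w
    have hw : ι Q w = ∑ i, b.repr w i • e i := by
      conv_lhs => rw [← Module.Basis.sum_repr b w]
      simp only [he, map_sum, map_smul]
    rw [hw, Finset.mul_sum, Finset.sum_mul]
    exact Finset.sum_congr rfl fun i _ => by
      rw [mul_smul_comm, smul_mul_assoc, hkey y i]
  induction x using CliffordAlgebra.induction with
  | algebraMap r => rw [← Algebra.commutes]
  | ι w => exact hι w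
  | mul a c ha hc => rw [← mul_assoc, ha, mul_assoc, hc, ← mul_assoc]
  | add a c ha hc => rw [mul_add, ha, hc, add_mul]

end Aux

theorem stmt_16 (V : Type*) [AddCommGroup V] [Module ℝ V]
    (hV : Module.finrank ℝ V = 3) (Q : QuadraticForm ℝ V)
    (A B C X : CliffordAlgebra Q)
    (h : A * X - X * B = C) :
    (A ^ 2 - A * (B + involute (reverse B)) + B * involute (reverse B)) * X =
      A * C - C * involute (reverse B) := by
  subst h
  rw [← star_def'] at *
  have hs : (B + star B) * X = X * (B + star B) := aux_central hV B X
  have hp : (B * star B) * X = X * (B * star B) := by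
    have h2 : star (B * star B) = B * star B := by
      rw [star_mul, star_star]
    have := aux_central hV (B * star B) X
    rw [h2] at this
    have h4 : (2 : ℝ) • ((B * star B) * X) = (2 : ℝ) • (X * (B * star B)) := by
      have l : (B * star B + B * star B) * X = X * (B * star B + B * star B) := this
      rw [add_mul, mul_add] at l
      rw [two_smul, two_smul]
      exact l
    exact smul_right_injective _ (two_ne_zero) h4
  calc (A ^ 2 - A * (B + star B) + B * star B) * X
      = A * (A * X) - A * ((B + star B) * X) + (B * star B) * X := by noncomm_ring
    _ = A * (A * X) - A * (X * (B + star B)) + X * (B * star B) := by rw [hs, hp]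
    _ = A * (A * X - X * B) - (A * X - X * B) * star B := by noncomm_ring
end
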